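/- arXiv:1011.6429 — 7 statements merged into one kernel-verified Lean document; each statement's English description precedes it below -/
import Mathlib

section
/- For every ACP*01 expression p (over any nonempty action set Act and any communication function γ), the set Reach(p) = {p' | p →* p'} of expressions reachable from p under the operational semantics is finite. Consequently the same holds for every PA*01 expression and every BPA*01 expression, since these are the ACP*01 expressions without encapsulation (and, for BPA*01, also without parallel composition), with the induced transition relation. -/
/-- ACP*01 expressions over an action set `Act`. -/
inductive Expr (Act : Type) : Type
  | dl : Expr Act
  | emp : Expr Act
  | act : Act → Expr Act
  | seq : Expr Act → Expr Act → Expr Act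
  | alt : Expr Act → Expr Act → Expr Act
  | star : Expr Act → Expr Act
  | par : Expr Act → Expr Act → Expr Act
  | encap : Set Act → Expr Act → Expr Act

variable {Act : Type}

/-- The termination predicate `↓` of ACP*01. -/
inductive Term : Expr Act → Prop
  | emp : Term Expr.emp
  | altl {p q : Expr Act} : Term p → Term (Expr.alt p q)
  | altr {p q : Expr Act} : Term q → Term (Expr.alt p q)
  | seq {p q : Expr Act} : Term p → Term q → Term (Expr.seq p q)
  | star {p : Expr Act} : Term (Expr.star p)
  | par {p q : Expr Act} : Term p → Term q → Term (Expr.par p q)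
  | encap {p : Expr Act} {H : Set Act} : Term p → Term (Expr.encap H p)

/-- The transition relation `p →a p'` of ACP*01, for communication function `γ`. -/
inductive Step (γ : Act → Act → Option Act) : Expr Act → Act → Expr Act → Prop
  | act {a : Act} : Step γ (Expr.act a) a Expr.emp
  | altl {p q p' : Expr Act} {a : Act} : Step γ p a p' → Step γ (Expr.alt p q) a p'
  | altr {p q q' : Expr Act} {a : Act} : Step γ q a q' → Step γ (Expr.alt p q) a q'
  | seql {p q p' : Expr Act} {a : Act} :
      Step γ p a p' → Step γ (Expr.seq p q) a (Expr.seq p' q)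
  | seqr {p q q' : Expr Act} {a : Act} :
      Term p → Step γ q a q' → Step γ (Expr.seq p q) a q'
  | star {p p' : Expr Act} {a : Act} :
      Step γ p a p' → Step γ (Expr.star p) a (Expr.seq p' (Expr.star p))
  | parl {p q p' : Expr Act} {a : Act} :
      Step γ p a p' → Step γ (Expr.par p q) a (Expr.par p' q)
  | parr {p q q' : Expr Act} {a : Act} :
      Step γ q a q' → Step γ (Expr.par p q) a (Expr.par p q')
  | comm {p q p' q' : Expr Act} {a b c : Act} :
      Step γ p a p' → Step γ q b q' → γ a b = some c →
      Step γ (Expr.par p q) c (Expr.par p' q')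
  | encap {p p' : Expr Act} {a : Act} {H : Set Act} :
      Step γ p a p' → a ∉ H → Step γ (Expr.encap H p) a (Expr.encap H p')

/-- `p → p'`: a transition with some label. -/
def StepAny (γ : Act → Act → Option Act) (p q : Expr Act) : Prop := ∃ a, Step γ p a q

/-- `p →* p'`: reachability. -/
def Reach (γ : Act → Act → Option Act) (p q : Expr Act) : Prop :=
  Relation.ReflTransGen (StepAny γ) p q

/-- `γ` is a communication function: an associative and commutative
binary partial operation on `Act`. -/
def IsCommFun (γ : Act → Act → Option Act) : Prop :=
  (∀ x y, γ x y = γ y x) ∧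
    (∀ x y z, (γ x y).bind (fun w => γ w z) = (γ y z).bind (fun w => γ x w))

/-- `γ` is handshaking: `γ (γ a b) c` is never defined. -/
def IsHandshaking (γ : Act → Act → Option Act) : Prop :=
  ∀ x y z w, γ x y = some w → γ w z = none

/-- ACP*01 expressions without occurrences of encapsulation. -/
def NoEncap : Expr Act → Prop
  | Expr.dl => True
  | Expr.emp => True
  | Expr.act _ => True
  | Expr.seq p q => NoEncap p ∧ NoEncap q
  | Expr.alt p q => NoEncap p ∧ NoEncap q
  | Expr.star p => NoEncap p
  | Expr.par p q => NoEncap p ∧ NoEncap q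
  | Expr.encap _ _ => False

/-- ACP*01 expressions without occurrences of parallel composition. -/
def NoPar : Expr Act → Prop
  | Expr.dl => True
  | Expr.emp => True
  | Expr.act _ => True
  | Expr.seq p q => NoPar p ∧ NoPar q
  | Expr.alt p q => NoPar p ∧ NoPar q
  | Expr.star p => NoPar p
  | Expr.par _ _ => False
  | Expr.encap _ p => NoPar p

/-- A bisimulation between two `Act`-labelled transition system spaces. -/
def IsBisimulation {S₁ S₂ : Type} (st₁ : S₁ → Act → S₁ → Prop) (t₁ : S₁ → Prop)
    (st₂ : S₂ → Act → S₂ → Prop) (t₂ : S₂ → Prop) (R : S₁ → S₂ → Prop) : Prop :=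
  ∀ s₁ s₂, R s₁ s₂ →
    (∀ a s₁', st₁ s₁ a s₁' → ∃ s₂', st₂ s₂ a s₂' ∧ R s₁' s₂') ∧
    (∀ a s₂', st₂ s₂ a s₂' → ∃ s₁', st₁ s₁ a s₁' ∧ R s₁' s₂') ∧
    (t₁ s₁ ↔ t₂ s₂)

/-- Bisimilarity between states of two `Act`-labelled transition system spaces. -/
def Bisimilar {S₁ S₂ : Type} (st₁ : S₁ → Act → S₁ → Prop) (t₁ : S₁ → Prop)
    (st₂ : S₂ → Act → S₂ → Prop) (t₂ : S₂ → Prop) (s₁ : S₁) (s₂ : S₂) : Prop :=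
  ∃ R : S₁ → S₂ → Prop, IsBisimulation st₁ t₁ st₂ t₂ R ∧ R s₁ s₂

/-- A finite superset of the reachable set, defined by recursion. -/
def Clo : Expr Act → Set (Expr Act)
  | Expr.dl => {Expr.dl}
  | Expr.emp => {Expr.emp}
  | Expr.act a => {Expr.act a, Expr.emp}
  | Expr.seq p q => (fun r => Expr.seq r q) '' Clo p ∪ Clo q
  | Expr.alt p q => {Expr.alt p q} ∪ Clo p ∪ Clo q
  | Expr.star p => {Expr.star p} ∪ (fun r => Expr.seq r (Expr.star p)) '' Clo p
  | Expr.par p q => Set.image2 Expr.par (Clo p) (Clo q)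
  | Expr.encap H p => Expr.encap H '' Clo p

lemma mem_clo : ∀ p : Expr Act, p ∈ Clo p := by
  intro p
  induction p with
  | dl => simp [Clo]
  | emp => simp [Clo]
  | act a => simp [Clo]
  | seq p q ihp ihq => exact Or.inl ⟨p, ihp, rfl⟩
  | alt p q ihp ihq => simp [Clo]
  | star p ih => simp [Clo]
  | par p q ihp ihq => exact ⟨p, ihp, q, ihq, rfl⟩
  | encap H p ih => exact ⟨p, ih, rfl⟩

lemma clo_finite : ∀ p : Expr Act, (Clo p).Finite := by
  intro p
  induction p with
  | dl => exact Set.finite_singleton _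
  | emp => exact Set.finite_singleton _
  | act a => exact (Set.finite_singleton _).insert _
  | seq p q ihp ihq => exact (ihp.image _).union ihq
  | alt p q ihp ihq => exact ((Set.finite_singleton _).union ihp).union ihq
  | star p ih => exact (Set.finite_singleton _).union (ih.image _)
  | par p q ihp ihq => exact ihp.image2 _ ihq
  | encap H p ih => exact ih.image _

lemma clo_closed (γ : Act → Act → Option Act) :
    ∀ p : Expr Act, ∀ q ∈ Clo p, ∀ a q', Step γ q a q' → q' ∈ Clo p := by
  intro p
  induction p with
  | dl =>
      rintro q hq a q' hs
      simp only [Clo, Set.mem_singleton_iff] at hq; subst hq; cases hs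
  | emp =>
      rintro q hq a q' hs
      simp only [Clo, Set.mem_singleton_iff] at hq; subst hq; cases hs
  | act b =>
      rintro q hq a q' hs
      simp only [Clo, Set.mem_insert_iff, Set.mem_singleton_iff] at hq
      rcases hq with rfl | rfl
      · cases hs; simp [Clo]
      · cases hs
  | seq p q ihp ihq =>
      rintro r hr a r' hs
      rcases hr with ⟨s, hs', rfl⟩ | hr
      · cases hs with
        | seql h => exact Or.inl ⟨_, ihp _ hs' _ _ h, rfl⟩
        | seqr ht h => exact Or.inr (ihq _ (mem_clo q) _ _ h)
      · exact Or.inr (ihq _ hr _ _ hs)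
  | alt p q ihp ihq =>
      rintro r hr a r' hs
      rcases hr with (hr | hr) | hr
      · simp only [Set.mem_singleton_iff] at hr; subst hr
        cases hs with
        | altl h => exact Or.inl (Or.inr (ihp _ (mem_clo p) _ _ h))
        | altr h => exact Or.inr (ihq _ (mem_clo q) _ _ h)
      · exact Or.inl (Or.inr (ihp _ hr _ _ hs))
      · exact Or.inr (ihq _ hr _ _ hs)
  | star p ih =>
      rintro r hr a r' hs
      rcases hr with hr | ⟨s, hs', rfl⟩
      · simp only [Set.mem_singleton_iff] at hr; subst hr
        cases hs with
        | star h => exact Or.inr ⟨_, ih _ (mem_clo p) _ _ h, rfl⟩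
      · cases hs with
        | seql h => exact Or.inr ⟨_, ih _ hs' _ _ h, rfl⟩
        | seqr ht h =>
            cases h with
            | star h2 => exact Or.inr ⟨_, ih _ (mem_clo p) _ _ h2, rfl⟩
  | par p q ihp ihq =>
      rintro r hr a r' hs
      rcases hr with ⟨s, hsm, t, htm, rfl⟩
      cases hs with
      | parl h => exact ⟨_, ihp _ hsm _ _ h, _, htm, rfl⟩
      | parr h => exact ⟨_, hsm, _, ihq _ htm _ _ h, rfl⟩
      | comm h1 h2 h3 => exact ⟨_, ihp _ hsm _ _ h1, _, ihq _ htm _ _ h2, rfl⟩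
  | encap H p ih =>
      rintro r hr a r' hs
      rcases hr with ⟨s, hsm, rfl⟩
      cases hs with
      | encap h hn => exact ⟨_, ih _ hsm _ _ h, rfl⟩

lemma reach_subset_clo (γ : Act → Act → Option Act) (p : Expr Act) :
    {q | Reach γ p q} ⊆ Clo p := by
  intro q hq
  induction hq with
  | refl => exact mem_clo p
  | tail _ hstep ih =>
      rcases hstep with ⟨a, hstep⟩
      exact clo_closed γ p _ ih _ _ hstep

/-- For every ACP*01 expression `p` (over any nonempty action set and any
communication function `γ`), the set of expressions reachable from `p` is finite;
consequently the same holds for PA*01 expressions (no encapsulation, `γ` everywhere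
undefined) and BPA*01 expressions (additionally no parallel composition). -/
theorem reach_finite {Act : Type} [Nonempty Act]
    (γ : Act → Act → Option Act) (hγ : IsCommFun γ) :
    (∀ p : Expr Act, {q | Reach γ p q}.Finite) ∧
    (∀ p : Expr Act, NoEncap p → {q | Reach (fun _ _ => none) p q}.Finite) ∧
    (∀ p : Expr Act, NoEncap p → NoPar p →
      {q | Reach (fun _ _ => none) p q}.Finite) := by

  refine ⟨fun p => (clo_finite p).subset (reach_subset_clo γ p), ?_, ?_⟩
  · exact fun p _ => (clo_finite p).subset (reach_subset_clo _ p)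
  · exact fun p _ _ => (clo_finite p).subset (reach_subset_clo _ p)
end

section
/- Let T₁ = (S₁,→₁,↓₁) and T₂ = (S₂,→₂,↓₂) be regular Act-labelled transition system spaces, and let s₁ ∈ S₁ and s₂ ∈ S₂ be bisimilar states. If s₁ is an element of a strongly connected component C₁ in T₁, then there exists a strongly connected component C₂ in T₂ reachable from s₂ such that for every s₁' ∈ C₁ there exists s₂' ∈ C₂ with s₁' bisimilar to s₂'. -/
variable {Act : Type}

/-- `s → s'`: a transition with some label, in a transition system space given by `st`. -/
def StepAnyOf {S : Type} (st : S → Act → S → Prop) (s s' : S) : Prop := ∃ a, st s a s'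

/-- `s →* s'`: reachability. -/
def ReachOf {S : Type} (st : S → Act → S → Prop) (s s' : S) : Prop :=
  Relation.ReflTransGen (StepAnyOf st) s s'

/-- A transition system space is regular if every state has finitely many
reachable states. -/
def RegularTSS {S : Type} (st : S → Act → S → Prop) : Prop :=
  ∀ s : S, {s' | ReachOf st s s'}.Finite

/-- A strongly connected component: a maximal set of mutually reachable states. -/
def IsSCCOf {S : Type} (st : S → Act → S → Prop) (C : Set S) : Prop :=
  (∀ s ∈ C, ∀ t ∈ C, ReachOf st s t) ∧
    ∀ D : Set S, C ⊆ D → (∀ s ∈ D, ∀ t ∈ D, ReachOf st s t) → D = C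

/-- Auxiliary: a bisimulation matches multi-step reachability. -/
theorem aux_reach_match {S₁ S₂ : Type} {st₁ : S₁ → Act → S₁ → Prop} {t₁ : S₁ → Prop}
    {st₂ : S₂ → Act → S₂ → Prop} {t₂ : S₂ → Prop} {R : S₁ → S₂ → Prop}
    (hR : IsBisimulation st₁ t₁ st₂ t₂ R) {a a' : S₁} (h : ReachOf st₁ a a') :
    ∀ b : S₂, R a b → ∃ b', ReachOf st₂ b b' ∧ R a' b' := by
  induction h with
  | refl => exact fun b hb => ⟨b, Relation.ReflTransGen.refl, hb⟩
  | tail _ hstep ih =>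
    rename_i x y _
    intro b hb
    obtain ⟨b', hbb', hxb'⟩ := ih b hb
    obtain ⟨act, hact⟩ := hstep
    obtain ⟨b'', hb'', hyb''⟩ := (hR x b' hxb').1 act y hact
    exact ⟨b'', hbb'.tail ⟨act, hb''⟩, hyb''⟩

/-- Auxiliary: the SCC of a point. -/
theorem aux_sccOf {S : Type} (st : S → Act → S → Prop) (x : S) :
    IsSCCOf st {y | ReachOf st x y ∧ ReachOf st y x} := by
  constructor
  · rintro s ⟨hxs, hsx⟩ t ⟨hxt, htx⟩
    exact hsx.trans hxt
  · intro D hCD hD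
    have hxC : x ∈ {y | ReachOf st x y ∧ ReachOf st y x} :=
      ⟨Relation.ReflTransGen.refl, Relation.ReflTransGen.refl⟩
    apply Set.Subset.antisymm
    · intro d hd
      exact ⟨hD x (hCD hxC) d hd, hD d hd x (hCD hxC)⟩
    · exact hCD

/-- If `s₁` and `s₂` are bisimilar states of regular transition system
spaces and `s₁` lies in an SCC `C₁`, then there is an SCC `C₂` reachable from `s₂`
such that every state of `C₁` is bisimilar to some state of `C₂`. -/
theorem scc_bisim {S₁ S₂ : Type} (st₁ : S₁ → Act → S₁ → Prop) (t₁ : S₁ → Prop)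
    (st₂ : S₂ → Act → S₂ → Prop) (t₂ : S₂ → Prop)
    (h₁ : RegularTSS st₁) (h₂ : RegularTSS st₂)
    (s₁ : S₁) (s₂ : S₂) (hb : Bisimilar st₁ t₁ st₂ t₂ s₁ s₂)
    (C₁ : Set S₁) (hC₁ : IsSCCOf st₁ C₁) (hs₁ : s₁ ∈ C₁) :
    ∃ C₂ : Set S₂, IsSCCOf st₂ C₂ ∧ (∀ s ∈ C₂, ReachOf st₂ s₂ s) ∧
      ∀ s₁' ∈ C₁, ∃ s₂' ∈ C₂, Bisimilar st₁ t₁ st₂ t₂ s₁' s₂' := by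
  obtain ⟨R, hR, hRs⟩ := hb
  -- C₁ is finite
  have hC₁sub : C₁ ⊆ {s' | ReachOf st₁ s₁ s'} := fun c hc => hC₁.1 s₁ hs₁ c hc
  have hC₁fin : C₁.Finite := (h₁ s₁).subset hC₁sub
  -- list covering C₁
  obtain ⟨l, hl⟩ : ∃ l : List S₁, ∀ c, c ∈ l ↔ c ∈ C₁ := by
    refine ⟨hC₁fin.toFinset.toList, fun c => ?_⟩
    rw [Finset.mem_toList, Set.Finite.mem_toFinset]
  -- loop lemma via list induction
  have loop : ∀ L : List S₁, (∀ c ∈ L, c ∈ C₁) → ∀ t : S₂, R s₁ t →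
      ∃ t', ReachOf st₂ t t' ∧ R s₁ t' ∧
        ∀ c ∈ L, ∃ u, R c u ∧ ReachOf st₂ t u ∧ ReachOf st₂ u t' := by
    intro L
    induction L with
    | nil => exact fun _ t ht => ⟨t, Relation.ReflTransGen.refl, ht, by simp⟩
    | cons c L ih =>
      intro hmem t ht
      have hcC : c ∈ C₁ := hmem c List.mem_cons_self
      obtain ⟨u, htu, hcu⟩ := aux_reach_match hR (hC₁.1 s₁ hs₁ c hcC) t ht
      obtain ⟨t₀, hut₀, ht₀⟩ := aux_reach_match hR (hC₁.1 c hcC s₁ hs₁) u hcu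
      obtain ⟨t', ht₀t', ht', hrest⟩ := ih (fun c' hc' => hmem c' (List.mem_cons_of_mem c hc')) t₀ ht₀
      refine ⟨t', (htu.trans hut₀).trans ht₀t', ht', ?_⟩
      intro c' hc'
      rcases List.mem_cons.mp hc' with h | h
      · exact ⟨u, h ▸ hcu, htu, hut₀.trans ht₀t'⟩
      · obtain ⟨u', hu', htu', hut'⟩ := hrest c' h
        exact ⟨u', hu', (htu.trans hut₀).trans htu', hut'⟩
  -- the good-step function on the subtype of reachable R-matches of s₁
  have step : ∀ t : {t : S₂ // R s₁ t ∧ ReachOf st₂ s₂ t},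
      ∃ t' : {t : S₂ // R s₁ t ∧ ReachOf st₂ s₂ t}, ReachOf st₂ t.1 t'.1 ∧
        ∀ c ∈ C₁, ∃ u, R c u ∧ ReachOf st₂ t.1 u ∧ ReachOf st₂ u t'.1 := by
    rintro ⟨t, ht, hreach⟩
    obtain ⟨t', htt', ht', hrest⟩ := loop l (fun c hc => (hl c).mp hc) t ht
    exact ⟨⟨t', ht', hreach.trans htt'⟩, htt', fun c hc => hrest c ((hl c).mpr hc)⟩
  choose g hg using step
  set x₀ : {t : S₂ // R s₁ t ∧ ReachOf st₂ s₂ t} := ⟨s₂, hRs, Relation.ReflTransGen.refl⟩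
  set f : ℕ → {t : S₂ // R s₁ t ∧ ReachOf st₂ s₂ t} := fun n => g^[n] x₀ with hf
  have hfsucc : ∀ n, f (n + 1) = g (f n) := fun n => Function.iterate_succ_apply' g n x₀
  -- chain reachability
  have chain : ∀ m n : ℕ, m ≤ n → ReachOf st₂ (f m).1 (f n).1 := by
    intro m n hmn
    induction n, hmn using Nat.le_induction with
    | base => exact Relation.ReflTransGen.refl
    | succ n hmn ih => exact ih.trans (by rw [hfsucc n]; exact (hg (f n)).1)
  -- pigeonhole
  have hfin : ({t : S₂ | R s₁ t ∧ ReachOf st₂ s₂ t}).Finite :=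
    (h₂ s₂).subset (fun t ht => ht.2)
  have hfinsub : Finite {t : S₂ // R s₁ t ∧ ReachOf st₂ s₂ t} := hfin.to_subtype
  obtain ⟨m, n, hmn, heq⟩ := Finite.exists_ne_map_eq_of_infinite f
  -- wlog m < n
  obtain ⟨i, j, hij, hfij⟩ : ∃ i j, i < j ∧ f i = f j := by
    rcases lt_or_gt_of_ne hmn with h | h
    · exact ⟨m, n, h, heq⟩
    · exact ⟨n, m, h, heq.symm⟩
  -- the SCC of (f i)
  refine ⟨{y | ReachOf st₂ (f i).1 y ∧ ReachOf st₂ y (f i).1}, aux_sccOf st₂ (f i).1, ?_, ?_⟩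
  · rintro s ⟨his, _⟩
    exact (f i).2.2.trans his
  · intro s₁' hs₁'
    obtain ⟨u, hu, hiu, hui⟩ := (hg (f i)).2 s₁' hs₁'
    have hback : ReachOf st₂ (g (f i)).1 (f i).1 := by
      rw [← hfsucc i, hfij]
      exact chain (i + 1) j hij
    exact ⟨u, ⟨hiu, hui.trans hback⟩, R, hR, hu⟩
end

section
/- If p and p' are BPA*01 expressions such that p →⁺ p', then OC(p) ≥ OC(p'). Moreover, if OC(p) = OC(p'), then p = p₁·q and p' = p₁'·q for some BPA*01 expressions p₁, p₁' and q. -/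
/-- BPA*01 expressions over an action set `Act`. -/
inductive BExpr (Act : Type) : Type
  | dl : BExpr Act
  | emp : BExpr Act
  | act : Act → BExpr Act
  | seq : BExpr Act → BExpr Act → BExpr Act
  | alt : BExpr Act → BExpr Act → BExpr Act
  | star : BExpr Act → BExpr Act

variable {Act : Type}

/-- The termination predicate `↓` of BPA*01. -/
inductive BTerm : BExpr Act → Prop
  | emp : BTerm BExpr.emp
  | altl {p q : BExpr Act} : BTerm p → BTerm (BExpr.alt p q)
  | altr {p q : BExpr Act} : BTerm q → BTerm (BExpr.alt p q)
  | seq {p q : BExpr Act} : BTerm p → BTerm q → BTerm (BExpr.seq p q)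
  | star {p : BExpr Act} : BTerm (BExpr.star p)

/-- The transition relation `p →a p'` of BPA*01. -/
inductive BStep : BExpr Act → Act → BExpr Act → Prop
  | act {a : Act} : BStep (BExpr.act a) a BExpr.emp
  | altl {p q p' : BExpr Act} {a : Act} : BStep p a p' → BStep (BExpr.alt p q) a p'
  | altr {p q q' : BExpr Act} {a : Act} : BStep q a q' → BStep (BExpr.alt p q) a q'
  | seql {p q p' : BExpr Act} {a : Act} :
      BStep p a p' → BStep (BExpr.seq p q) a (BExpr.seq p' q)
  | seqr {p q q' : BExpr Act} {a : Act} :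
      BTerm p → BStep q a q' → BStep (BExpr.seq p q) a q'
  | star {p p' : BExpr Act} {a : Act} :
      BStep p a p' → BStep (BExpr.star p) a (BExpr.seq p' (BExpr.star p))

/-- `p → p'`: a transition with some label. -/
def BStepAny (p q : BExpr Act) : Prop := ∃ a, BStep p a q

/-- `p →* p'`: reachability. -/
def BReach (p q : BExpr Act) : Prop := Relation.ReflTransGen BStepAny p q

/-- `p` is normed: some terminating expression is reachable from `p`. -/
def BNormed (p : BExpr Act) : Prop := ∃ q, BReach p q ∧ BTerm q

/-- A strongly connected component: a maximal set of mutually reachable states. -/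
def IsSCC (C : Set (BExpr Act)) : Prop :=
  (∀ s ∈ C, ∀ t ∈ C, BReach s t) ∧
    ∀ D : Set (BExpr Act), C ⊆ D → (∀ s ∈ D, ∀ t ∈ D, BReach s t) → D = C

/-- A trivial SCC: a singleton `{s}` with no transition `s → s`. -/
def IsTrivialSCC (C : Set (BExpr Act)) : Prop := ∃ s, C = {s} ∧ ¬ BStepAny s s

/-- `C · q = { p · q | p ∈ C }`. -/
def seqSet (C : Set (BExpr Act)) (q : BExpr Act) : Set (BExpr Act) :=
  (fun p => BExpr.seq p q) '' C

/-- A basic SCC: `C = C' · q*` for some set `C'` that is not an SCC. -/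
def IsBasic (C : Set (BExpr Act)) : Prop :=
  ∃ (C' : Set (BExpr Act)) (q : BExpr Act), C = seqSet C' (BExpr.star q) ∧ ¬ IsSCC C'

/-- The set `Extⁿ(s)` of normed exit transitions from `s`, w.r.t. the SCC `C`. -/
def ExtN (C : Set (BExpr Act)) (s : BExpr Act) : Set (Act × BExpr Act) :=
  {e | BStep s e.1 e.2 ∧ e.2 ∉ C ∧ BNormed e.2}

/-- `s ∈ C` is an alive exit state if `s↓` or `s` has a normed exit transition. -/
def AliveExit (C : Set (BExpr Act)) (s : BExpr Act) : Prop :=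
  s ∈ C ∧ (BTerm s ∨ ∃ e, e ∈ ExtN C s)

/-- `E · q = { (a, r · q) | (a, r) ∈ E }`. -/
def extSeq (E : Set (Act × BExpr Act)) (q : BExpr Act) : Set (Act × BExpr Act) :=
  (fun e => (e.1, BExpr.seq e.2 q)) '' E

/-- Is the expression a star expression? -/
def isStarB : BExpr Act → Bool
  | BExpr.star _ => true
  | _ => false

/-- The measure `OC` on BPA*01 expressions. -/
def OC : BExpr Act → ℕ
  | BExpr.dl => 0
  | BExpr.emp => 0
  | BExpr.act _ => 1
  | BExpr.seq _ q => if isStarB q then 0 else OC q + 1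
  | BExpr.alt p q => max (OC p) (OC q) + 1
  | BExpr.star _ => 1

lemma step_OC {Act : Type} {p p' : BExpr Act} {a : Act} (h : BStep p a p') :
    OC p' ≤ OC p ∧ (OC p = OC p' →
      ∃ p₁ p₁' q : BExpr Act, p = BExpr.seq p₁ q ∧ p' = BExpr.seq p₁' q) := by
  induction h with
  | act => simp [OC]
  | @altl p q p' a hs ih =>
    refine ⟨le_trans ih.1 ?_, fun he => ?_⟩
    · simp [OC]; omega
    · exfalso
      have h1 : OC p' ≤ OC p := ih.1
      simp [OC] at he; omega
  | @altr p q q' a hs ih =>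
    refine ⟨le_trans ih.1 ?_, fun he => ?_⟩
    · simp [OC]; omega
    · exfalso
      have h1 : OC q' ≤ OC q := ih.1
      simp [OC] at he; omega
  | @seql p q p' a hs ih =>
    exact ⟨by simp [OC], fun _ => ⟨p, p', q, rfl, rfl⟩⟩
  | @seqr p q q' a ht hs ih =>
    cases q with
    | star r =>
      cases hs with
      | @star _ r' _ hs' =>
        exact ⟨by simp [OC, isStarB], fun _ => ⟨p, r', BExpr.star r, rfl, rfl⟩⟩
    | dl => cases hs
    | emp => cases hs
    | act b =>
      have hq : OC (BExpr.seq p (BExpr.act b)) = OC (BExpr.act b) + 1 := rfl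
      have h1 : OC q' ≤ OC (BExpr.act b) := ih.1
      exact ⟨by omega, fun he => absurd he (by omega)⟩
    | seq r s =>
      have hq : OC (BExpr.seq p (BExpr.seq r s)) = OC (BExpr.seq r s) + 1 := rfl
      have h1 : OC q' ≤ OC (BExpr.seq r s) := ih.1
      exact ⟨by omega, fun he => absurd he (by omega)⟩
    | alt r s =>
      have hq : OC (BExpr.seq p (BExpr.alt r s)) = OC (BExpr.alt r s) + 1 := rfl
      have h1 : OC q' ≤ OC (BExpr.alt r s) := ih.1
      exact ⟨by omega, fun he => absurd he (by omega)⟩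
  | @star p p' a hs ih =>
    exact ⟨by simp [OC, isStarB], fun he => by simp [OC, isStarB] at he⟩

/-- If `p →⁺ p'`, then `OC p ≥ OC p'`; moreover, if `OC p = OC p'`,
then `p = p₁ · q` and `p' = p₁' · q` for some `p₁`, `p₁'` and `q`. -/
theorem OC_monotonic {Act : Type} [Nonempty Act] {p p' : BExpr Act}
    (h : Relation.TransGen BStepAny p p') :
    OC p' ≤ OC p ∧
      (OC p = OC p' →
        ∃ p₁ p₁' q : BExpr Act, p = BExpr.seq p₁ q ∧ p' = BExpr.seq p₁' q) := by
  induction h with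
  | single hs =>
    obtain ⟨a, hs⟩ := hs
    exact step_OC hs
  | @tail b c hpb hs ih =>
    obtain ⟨a, hs⟩ := hs
    have s := step_OC hs
    refine ⟨le_trans s.1 ih.1, fun he => ?_⟩
    have h1 : OC b = OC p := le_antisymm ih.1 (he ▸ s.1)
    obtain ⟨p₁, p₁', q, hp, hb⟩ := ih.2 h1.symm
    obtain ⟨r, r', s', hb2, hp'⟩ := s.2 (by omega)
    rw [hb] at hb2
    injection hb2 with h2 h3
    exact ⟨p₁, r', q, hp, by rw [hp', h3]⟩
end

section
/- If C is a non-trivial strongly connected component in BPA*01, then there exist a set of BPA*01 expressions C' and a BPA*01 expression q such that C = C'·q, where C'·q = {p·q | p ∈ C'}. -/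
variable {Act : Type}

lemma isStar_iff {q : BExpr Act} : isStarB q = true ↔ ∃ z, q = BExpr.star z := by
  cases q <;> simp [isStarB]

lemma bstep_oc {p p' : BExpr Act} {a : Act} (h : BStep p a p') : OC p' ≤ OC p := by
  induction h with
  | act => simp [OC]
  | altl h ih => simp only [OC]; omega
  | altr h ih => simp only [OC]; omega
  | @seql p q p' a h ih => simp only [OC]; exact le_refl _
  | @seqr p q q' a ht h ih =>
      by_cases hs : isStarB q
      · obtain ⟨z, rfl⟩ := isStar_iff.mp hs
        cases h
        simp [OC, isStarB]
      · simp only [OC, if_neg hs]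
        omega
  | star h ih => simp [OC, isStarB]

lemma reach_oc {p p' : BExpr Act} (h : BReach p p') : OC p' ≤ OC p := by
  induction h with
  | refl => exact le_refl _
  | tail _ hstep ih =>
      obtain ⟨a, hst⟩ := hstep
      exact le_trans (bstep_oc hst) ih

lemma step_shape {p p' : BExpr Act} {a : Act} (h : BStep p a p') :
    p' = BExpr.emp ∨ ∃ u v, p' = BExpr.seq u v := by
  induction h with
  | act => exact Or.inl rfl
  | altl _ ih => exact ih
  | altr _ ih => exact ih
  | seql _ _ => exact Or.inr ⟨_, _, rfl⟩
  | seqr _ _ ih => exact ih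
  | star _ => exact Or.inr ⟨_, _, rfl⟩

lemma reach_emp {x : BExpr Act} (h : BReach BExpr.emp x) : x = BExpr.emp := by
  rcases Relation.ReflTransGen.cases_head h with rfl | ⟨c, ⟨a, hc⟩, _⟩
  · rfl
  · cases hc

lemma scc_nonempty {C : Set (BExpr Act)} (hC : IsSCC C) : C.Nonempty := by
  by_contra h
  rw [Set.not_nonempty_iff_eq_empty] at h
  subst h
  have h2 := hC.2 {BExpr.emp} (by simp) (by
    rintro a rfl b rfl; exact Relation.ReflTransGen.refl)
  exact Set.singleton_ne_empty _ h2

lemma mem_of_mutual {C : Set (BExpr Act)} (hC : IsSCC C) {s x : BExpr Act}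
    (hs : s ∈ C) (h1 : BReach s x) (h2 : BReach x s) : x ∈ C := by
  have hD := hC.2 (C ∪ {x}) Set.subset_union_left ?pairs
  · rw [← hD]; exact Or.inr rfl
  case pairs =>
    rintro a (ha | rfl) b (hb | rfl)
    · exact hC.1 a ha b hb
    · exact Relation.ReflTransGen.trans (hC.1 a ha s hs) h1
    · exact Relation.ReflTransGen.trans h2 (hC.1 s hs b hb)
    · exact Relation.ReflTransGen.trans h2 h1

lemma incoming {C : Set (BExpr Act)} (hC : IsSCC C) (hnt : ¬ IsTrivialSCC C)
    {s : BExpr Act} (hs : s ∈ C) : ∃ x ∈ C, BStepAny x s := by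
  by_cases h : ∃ t ∈ C, t ≠ s
  · obtain ⟨t, ht, hne⟩ := h
    have hreach : BReach t s := hC.1 t ht s hs
    rcases Relation.ReflTransGen.cases_tail hreach with heq | ⟨x, hx1, hx2⟩
    · exact absurd heq.symm hne
    · refine ⟨x, ?_, hx2⟩
      exact mem_of_mutual hC hs
        (Relation.ReflTransGen.trans (hC.1 s hs t ht) hx1)
        (Relation.ReflTransGen.single hx2)
  · push_neg at h
    have hCs : C = {s} := Set.eq_singleton_iff_unique_mem.mpr ⟨hs, fun t ht => h t ht⟩
    rw [IsTrivialSCC] at hnt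
    push_neg at hnt
    exact ⟨s, hs, hnt s hCs⟩

lemma is_seq {C : Set (BExpr Act)} (hC : IsSCC C) (hnt : ¬ IsTrivialSCC C)
    {s : BExpr Act} (hs : s ∈ C) : ∃ u v, s = BExpr.seq u v := by
  obtain ⟨x, hx, a, hst⟩ := incoming hC hnt hs
  rcases step_shape hst with rfl | ⟨u, v, rfl⟩
  · have hxe : x = BExpr.emp := reach_emp (hC.1 _ hs _ hx)
    subst hxe; cases hst
  · exact ⟨u, v, rfl⟩

lemma tail_fixed {C : Set (BExpr Act)} (hC : IsSCC C) {u0 q s0 : BExpr Act}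
    (hs0 : s0 ∈ C) (he : s0 = BExpr.seq u0 q) :
    ∀ s, BReach s0 s → BReach s s0 → ∃ u, s = BExpr.seq u q ∧ s ∈ C := by
  intro s h1
  induction h1 with
  | refl => intro _; exact ⟨u0, he, hs0⟩
  | @tail b c hb hstep ih =>
    intro h2
    obtain ⟨a, hst⟩ := hstep
    have hbs0 : BReach b s0 := Relation.ReflTransGen.head ⟨a, hst⟩ h2
    obtain ⟨u, heq, hbC⟩ := ih hbs0
    subst heq
    have hcC : c ∈ C := mem_of_mutual hC hs0
      (Relation.ReflTransGen.tail hb ⟨a, hst⟩) h2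
    cases hst with
    | seql h' => exact ⟨_, rfl, hcC⟩
    | seqr ht h' =>
      by_cases hsq : isStarB q
      · obtain ⟨z, rfl⟩ := isStar_iff.mp hsq
        cases h'
        exact ⟨_, rfl, hcC⟩
      · exfalso
        have h3 : OC c ≤ OC q := bstep_oc h'
        have h4 : OC s0 ≤ OC c := reach_oc h2
        have h5 : OC (BExpr.seq u q) ≤ OC s0 := reach_oc hb
        have h6 : OC (BExpr.seq u q) = OC q + 1 := by simp only [OC, if_neg hsq]
        omega

/-- Every non-trivial strongly connected component in BPA*01 is of
the form `C' · q = { p · q | p ∈ C' }`. -/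
theorem scc_seq {Act : Type} [Nonempty Act] {C : Set (BExpr Act)}
    (hC : IsSCC C) (hnt : ¬ IsTrivialSCC C) :
    ∃ (C' : Set (BExpr Act)) (q : BExpr Act), C = seqSet C' q := by
  obtain ⟨s0, hs0⟩ := scc_nonempty hC
  obtain ⟨u0, q, he⟩ := is_seq hC hnt hs0
  refine ⟨{u | BExpr.seq u q ∈ C}, q, ?_⟩
  ext s
  constructor
  · intro hs
    obtain ⟨u, hu, _⟩ :=
      tail_fixed hC hs0 he s (hC.1 s0 hs0 s hs) (hC.1 s hs s0 hs0)
    exact ⟨u, show BExpr.seq u q ∈ C from hu ▸ hs, hu.symm⟩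
  · rintro ⟨u, hu, rfl⟩
    exact hu
end

section
/- If C is a basic strongly connected component in BPA*01, then Extⁿ(p) = ∅ for all p ∈ C, i.e. no state of C has a normed exit transition. -/
variable {Act : Type}

/-- Any step from `p · q*` goes to some `p' · q*`, either via a step of `p`
or (if `p↓`) via a step of `q`. -/
lemma step_seq_star {p q r : BExpr Act} {a : Act}
    (h : BStep (BExpr.seq p (BExpr.star q)) a r) :
    ∃ p', r = BExpr.seq p' (BExpr.star q) ∧
      (BStep p a p' ∨ (BTerm p ∧ BStep q a p')) := by
  cases h with
  | seql h => exact ⟨_, rfl, Or.inl h⟩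
  | seqr ht h =>
      cases h with
      | star h => exact ⟨_, rfl, Or.inr ⟨ht, h⟩⟩

/-- Any state reachable from `p · q*` has the form `p' · q*`. -/
lemma reach_seq_star {p q r : BExpr Act}
    (h : BReach (BExpr.seq p (BExpr.star q)) r) :
    ∃ p', r = BExpr.seq p' (BExpr.star q) := by
  induction h with
  | refl => exact ⟨p, rfl⟩
  | tail _ hstep ih =>
      obtain ⟨p', rfl⟩ := ih
      obtain ⟨a, hstep⟩ := hstep
      obtain ⟨p'', rfl, _⟩ := step_seq_star hstep
      exact ⟨p'', rfl⟩

lemma term_seq {p r : BExpr Act} (h : BTerm (BExpr.seq p r)) : BTerm p := by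
  cases h with | seq h _ => exact h

/-- Reachability lifts along left sequential contexts. -/
lemma reach_seql {p p' r : BExpr Act} (h : BReach p p') :
    BReach (BExpr.seq p r) (BExpr.seq p' r) := by
  induction h with
  | refl => exact Relation.ReflTransGen.refl
  | tail _ hstep ih =>
      obtain ⟨a, hstep⟩ := hstep
      exact ih.tail ⟨a, BStep.seql hstep⟩

/-- Any state on a path between two states of an SCC is itself in the SCC. -/
lemma scc_mem_between {C : Set (BExpr Act)} (hC : IsSCC C)
    {x y z : BExpr Act} (hx : x ∈ C) (hy : y ∈ C)
    (h1 : BReach x z) (h2 : BReach z y) : z ∈ C := by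
  have hsub : C ⊆ insert z C := Set.subset_insert _ _
  have hmut : ∀ s ∈ insert z C, ∀ t ∈ insert z C, BReach s t := by
    intro s hs t ht
    have hsz : BReach s z → BReach s t := fun h =>
      match Set.mem_insert_iff.mp ht with
      | Or.inl he => he ▸ h
      | Or.inr ht' => h.trans (h2.trans (hC.1 y hy t ht'))
    rcases Set.mem_insert_iff.mp hs with he | hs'
    · exact hsz (by rw [he]; exact Relation.ReflTransGen.refl)
    · exact hsz ((hC.1 s hs' x hx).trans h1)
  have heq := hC.2 _ hsub hmut
  rw [← heq]; exact Set.mem_insert _ _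

/-- If an SCC consists of states `r · q*` and no "restart" step (via `q`) occurs
between two states of `C`, then the set of left components is itself an SCC. -/
lemma no_restart_scc {C : Set (BExpr Act)} {q : BExpr Act} (hC : IsSCC C)
    (hform : ∀ x ∈ C, ∃ r, x = BExpr.seq r (BExpr.star q))
    (Hno : ¬ ∃ (r s : BExpr Act) (a : Act),
      BExpr.seq r (BExpr.star q) ∈ C ∧ BTerm r ∧ BStep q a s ∧
        BExpr.seq s (BExpr.star q) ∈ C) :
    IsSCC {r | BExpr.seq r (BExpr.star q) ∈ C} := by
  constructor
  · intro r hr r' hr'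
    have hpath : BReach (BExpr.seq r (BExpr.star q)) (BExpr.seq r' (BExpr.star q)) :=
      hC.1 _ hr _ hr'
    suffices H : ∀ x, BReach x (BExpr.seq r' (BExpr.star q)) →
        ∀ u, x = BExpr.seq u (BExpr.star q) → x ∈ C → BReach u r' by
      exact H _ hpath r rfl hr
    intro x hx
    induction hx using Relation.ReflTransGen.head_induction_on with
    | refl =>
        intro u hu _
        injection hu with h1 _
        subst h1
        exact Relation.ReflTransGen.refl
    | head hstep hrest ih =>
        intro u hu hxC
        subst hu
        obtain ⟨a, hstep⟩ := hstep
        obtain ⟨s, rfl, hcase⟩ := step_seq_star hstep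
        have hsC : BExpr.seq s (BExpr.star q) ∈ C :=
          scc_mem_between hC hxC hr'
            (Relation.ReflTransGen.single ⟨a, hstep⟩) hrest
        rcases hcase with hus | ⟨ht, hqs⟩
        · exact (Relation.ReflTransGen.single ⟨a, hus⟩).trans (ih s rfl hsC)
        · exact absurd ⟨u, s, a, hxC, ht, hqs, hsC⟩ Hno
  · intro D hTD hD
    have hCD : C ⊆ seqSet D (BExpr.star q) := by
      intro x hx
      obtain ⟨r, rfl⟩ := hform x hx
      exact ⟨r, hTD hx, rfl⟩
    have hmut : ∀ s ∈ seqSet D (BExpr.star q), ∀ t ∈ seqSet D (BExpr.star q),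
        BReach s t := by
      rintro s ⟨rs, hrs, rfl⟩ t ⟨rt, hrt, rfl⟩
      exact reach_seql (hD rs hrs rt hrt)
    have heq := hC.2 _ hCD hmut
    ext r
    constructor
    · intro hr
      show BExpr.seq r (BExpr.star q) ∈ C
      rw [← heq]
      exact ⟨r, hr, rfl⟩
    · intro hr
      exact hTD hr

/-- If `C` is a basic strongly connected component in BPA*01, then
no state of `C` has a normed exit transition. -/
theorem basic_scc_no_extn {Act : Type} [Nonempty Act] {C : Set (BExpr Act)}
    (hC : IsSCC C) (hnt : ¬ IsTrivialSCC C) (hb : IsBasic C) :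
    ∀ p ∈ C, ExtN C p = ∅ := by
  obtain ⟨C', q, hCeq, hC'⟩ := hb
  have hform : ∀ x ∈ C, ∃ r, x = BExpr.seq r (BExpr.star q) := by
    intro x hx
    rw [hCeq] at hx
    obtain ⟨r, _, rfl⟩ := hx
    exact ⟨r, rfl⟩
  have hT : C' = {r | BExpr.seq r (BExpr.star q) ∈ C} := by
    ext r
    constructor
    · intro hr
      show BExpr.seq r (BExpr.star q) ∈ C
      rw [hCeq]
      exact ⟨r, hr, rfl⟩
    · intro hr
      have hr' : BExpr.seq r (BExpr.star q) ∈ C := hr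
      rw [hCeq] at hr'
      obtain ⟨r'', hr'', heq⟩ := hr'
      injection heq with h1 _
      subst h1
      exact hr''
  have Hres : ∃ (r s : BExpr Act) (a : Act),
      BExpr.seq r (BExpr.star q) ∈ C ∧ BTerm r ∧ BStep q a s ∧
        BExpr.seq s (BExpr.star q) ∈ C := by
    by_contra Hno
    exact hC' (hT ▸ no_restart_scc hC hform Hno)
  obtain ⟨r0, s0, a0, hr0C, hr0t, hqs0, hs0C⟩ := Hres
  intro p hp
  ext e
  obtain ⟨a, t'⟩ := e
  simp only [Set.mem_empty_iff_false, iff_false]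
  rintro ⟨hstep, htC, w0, hw, hwt⟩
  obtain ⟨p0, rfl⟩ := hform p hp
  obtain ⟨t, rfl, -⟩ := step_seq_star hstep
  obtain ⟨u, rfl⟩ := reach_seq_star hw
  have hu : BTerm u := term_seq hwt
  set t' := BExpr.seq t (BExpr.star q) with ht'def
  set M : Set (BExpr Act) :=
    {z | BReach t' z ∧ BReach z (BExpr.seq u (BExpr.star q))} with hMdef
  have ht'M : t' ∈ M := ⟨Relation.ReflTransGen.refl, hw⟩
  have hwstep : BStepAny (BExpr.seq u (BExpr.star q)) (BExpr.seq s0 (BExpr.star q)) :=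
    ⟨a0, BStep.seqr hu (BStep.star hqs0)⟩
  have hCt' : ∀ c ∈ C, BReach c t' := fun c hc =>
    (hC.1 c hc _ hp).tail ⟨a, hstep⟩
  have hMC : ∀ z ∈ M, ∀ c ∈ C, BReach z c := fun z hz c hc =>
    (hz.2.tail hwstep).trans (hC.1 _ hs0C c hc)
  have hmut : ∀ x ∈ C ∪ M, ∀ y ∈ C ∪ M, BReach x y := by
    rintro x (hx | hx) y (hy | hy)
    · exact hC.1 x hx y hy
    · exact (hCt' x hx).trans hy.1
    · exact hMC x hx y hy
    · exact ((hMC x hx _ hp).trans (hCt' _ hp)).trans hy.1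
  have heq := hC.2 (C ∪ M) Set.subset_union_left hmut
  have : t' ∈ C := heq ▸ Set.mem_union_right C ht'M
  exact htC this
end

section
/- Let C be a non-trivial strongly connected component in BPA*01, let p ∈ C, and let q be a normed BPA*01 expression such that C·q is a strongly connected component. Then, computing exit transitions with respect to the SCC C·q: if p↓, then Extⁿ(p·q) = Extⁿ(p)·q ∪ {(a,r) | r ∉ C·q, r is normed, and q →a r}; and if not p↓, then Extⁿ(p·q) = Extⁿ(p)·q, where Extⁿ(p) is computed with respect to C and Extⁿ(p)·q = {(a,r·q) | (a,r) ∈ Extⁿ(p)}. -/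
variable {Act : Type}

lemma breach_seq_left {p p' q : BExpr Act} (h : BReach p p') :
    BReach (BExpr.seq p q) (BExpr.seq p' q) := by
  induction h with
  | refl => exact Relation.ReflTransGen.refl
  | tail _ hs ih =>
      obtain ⟨a, hs⟩ := hs
      exact ih.tail ⟨a, BStep.seql hs⟩

lemma bnormed_seq {p q : BExpr Act} (hp : BNormed p) (hq : BNormed q) :
    BNormed (BExpr.seq p q) := by
  obtain ⟨p', hpr, hpt⟩ := hp
  obtain ⟨q', hqr, hqt⟩ := hq
  rcases hqr.cases_head with rfl | ⟨q1, ⟨a, hs⟩, hr⟩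
  · exact ⟨BExpr.seq p' q, breach_seq_left hpr, BTerm.seq hpt hqt⟩
  · exact ⟨q', (breach_seq_left hpr).trans
      ((Relation.ReflTransGen.single ⟨a, BStep.seqr hpt hs⟩).trans hr), hqt⟩

lemma reach_from_seq {p q s : BExpr Act} (h : BReach (BExpr.seq p q) s) :
    (∃ p', BReach p p' ∧ s = BExpr.seq p' q) ∨
      (∃ p', BReach p p' ∧ BTerm p' ∧ BReach q s) := by
  induction h with
  | refl => exact Or.inl ⟨p, Relation.ReflTransGen.refl, rfl⟩
  | tail _ hs ih =>
      obtain ⟨a, hs⟩ := hs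
      rcases ih with ⟨p', hr, rfl⟩ | ⟨p', hr, ht, hqr⟩
      · cases hs with
        | seql h' =>
            exact Or.inl ⟨_, hr.tail ⟨a, h'⟩, rfl⟩
        | seqr ht h' =>
            exact Or.inr ⟨p', hr, ht, Relation.ReflTransGen.single ⟨a, h'⟩⟩
      · exact Or.inr ⟨p', hr, ht, hqr.tail ⟨a, hs⟩⟩

lemma bnormed_of_seq {p q : BExpr Act} (h : BNormed (BExpr.seq p q)) : BNormed p := by
  obtain ⟨t, hr, ht⟩ := h
  rcases reach_from_seq hr with ⟨p', hpr, rfl⟩ | ⟨p', hpr, hpt, _⟩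
  · cases ht with
    | seq h1 _ => exact ⟨p', hpr, h1⟩
  · exact ⟨p', hpr, hpt⟩

lemma mem_seqSet_iff {C : Set (BExpr Act)} {p q : BExpr Act} :
    BExpr.seq p q ∈ seqSet C q ↔ p ∈ C := by
  constructor
  · rintro ⟨x, hx, hxe⟩
    cases hxe; exact hx
  · intro h; exact ⟨p, h, rfl⟩

/-- Let `C` be a non-trivial SCC in BPA*01, `p ∈ C`, and `q` normed
such that `C · q` is an SCC. Then, w.r.t. the SCC `C · q`:
if `p↓` then `Extⁿ(p·q) = Extⁿ(p)·q ∪ {(a,r) | r ∉ C·q, r normed, q →a r}`,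
and if `¬ p↓` then `Extⁿ(p·q) = Extⁿ(p)·q`. -/
theorem seq_extn {Act : Type} [Nonempty Act] {C : Set (BExpr Act)}
    (hC : IsSCC C) (hnt : ¬ IsTrivialSCC C)
    {p : BExpr Act} (hp : p ∈ C) {q : BExpr Act} (hqn : BNormed q)
    (hCq : IsSCC (seqSet C q)) :
    (BTerm p →
      ExtN (seqSet C q) (BExpr.seq p q) =
        extSeq (ExtN C p) q ∪
          {e | e.2 ∉ seqSet C q ∧ BNormed e.2 ∧ BStep q e.1 e.2}) ∧
    (¬ BTerm p →
      ExtN (seqSet C q) (BExpr.seq p q) = extSeq (ExtN C p) q) := by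
  have hsub : extSeq (ExtN C p) q ⊆ ExtN (seqSet C q) (BExpr.seq p q) := by
    rintro ⟨a, r⟩ ⟨⟨b, p'⟩, ⟨hst, hnc, hn⟩, he⟩
    obtain ⟨rfl, rfl⟩ := Prod.mk.injEq .. ▸ he
    exact ⟨BStep.seql hst, fun h => hnc (mem_seqSet_iff.mp h), bnormed_seq hn hqn⟩
  constructor
  · intro hpt
    ext ⟨a, r⟩
    constructor
    · rintro ⟨hst, hnc, hn⟩
      cases hst with
      | @seql _ _ p' _ h' =>
          exact Or.inl ⟨(a, p'), ⟨h', fun h => hnc (mem_seqSet_iff.mpr h),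
            bnormed_of_seq hn⟩, rfl⟩
      | seqr ht h' => exact Or.inr ⟨hnc, hn, h'⟩
    · rintro (h | ⟨hnc, hn, hst⟩)
      · exact hsub h
      · exact ⟨BStep.seqr hpt hst, hnc, hn⟩
  · intro hpt
    ext ⟨a, r⟩
    constructor
    · rintro ⟨hst, hnc, hn⟩
      cases hst with
      | @seql _ _ p' _ h' =>
          exact ⟨(a, p'), ⟨h', fun h => hnc (mem_seqSet_iff.mpr h),
            bnormed_of_seq hn⟩, rfl⟩
      | seqr ht h' => exact absurd ht hpt
    · exact fun h => hsub h
end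

section
/- PA*01 is less expressive than the union over all communication functions γ of ACP*01 modulo bisimilarity: every PA*01 expression is bisimilar to an ACP*01 expression for some communication function γ (e.g. the everywhere-undefined one), and there exist a communication function γ and an ACP*01 expression (for instance ε·(a·b)*·d ‖ c with γ(b,c) = e, for distinct actions a, b, c, d, e) that is not bisimilar to any PA*01 expression. -/
variable {Act : Type}

section AuxPA

namespace PAProof

open Expr

variable {Act : Type}

/-- the everywhere-undefined communication function -/
abbrev gz : Act → Act → Option Act := fun _ _ => none

section BisimGeneric

variable {S₁ S₂ S₃ : Type} {st₁ : S₁ → Act → S₁ → Prop} {t₁ : S₁ → Prop}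
  {st₂ : S₂ → Act → S₂ → Prop} {t₂ : S₂ → Prop} {st₃ : S₃ → Act → S₃ → Prop} {t₃ : S₃ → Prop}
  {x : S₁} {y : S₂} {z : S₃}

lemma bisim_comp (h₁ : Bisimilar st₁ t₁ st₂ t₂ x y) (h₂ : Bisimilar st₂ t₂ st₃ t₃ y z) :
    Bisimilar st₁ t₁ st₃ t₃ x z := by
  obtain ⟨R₁, hR₁, hxy⟩ := h₁
  obtain ⟨R₂, hR₂, hyz⟩ := h₂
  refine ⟨fun s u => ∃ m, R₁ s m ∧ R₂ m u, ?_, ⟨y, hxy, hyz⟩⟩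
  rintro s u ⟨m, hsm, hmu⟩
  obtain ⟨f₁, b₁, tm₁⟩ := hR₁ s m hsm
  obtain ⟨f₂, b₂, tm₂⟩ := hR₂ m u hmu
  refine ⟨?_, ?_, tm₁.trans tm₂⟩
  · intro α s' hs'
    obtain ⟨m', hm', hr⟩ := f₁ α s' hs'
    obtain ⟨u', hu', hr₂⟩ := f₂ α m' hm'
    exact ⟨u', hu', m', hr, hr₂⟩
  · intro α u' hu'
    obtain ⟨m', hm', hr₂⟩ := b₂ α u' hu'
    obtain ⟨s', hs', hr₁⟩ := b₁ α m' hm'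
    exact ⟨s', hs', m', hr₁, hr₂⟩

lemma bisim_symm (h : Bisimilar st₁ t₁ st₂ t₂ x y) : Bisimilar st₂ t₂ st₁ t₁ y x := by
  obtain ⟨R, hR, hxy⟩ := h
  refine ⟨fun u s => R s u, ?_, hxy⟩
  intro u s hus
  obtain ⟨f, bwd, tm⟩ := hR s u hus
  exact ⟨fun α u' hu' => (bwd α u' hu').imp (fun s' hs' => ⟨hs'.1, hs'.2⟩),
    fun α s' hs' => (f α s' hs').imp (fun u' hu' => ⟨hu'.1, hu'.2⟩), tm.symm⟩

lemma bisim_fwd (h : Bisimilar st₁ t₁ st₂ t₂ x y) {α x'} (hs : st₁ x α x') :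
    ∃ y', st₂ y α y' ∧ Bisimilar st₁ t₁ st₂ t₂ x' y' := by
  obtain ⟨R, hR, hxy⟩ := h
  obtain ⟨y', hy', hr⟩ := (hR x y hxy).1 α x' hs
  exact ⟨y', hy', R, hR, hr⟩

lemma bisim_bwd (h : Bisimilar st₁ t₁ st₂ t₂ x y) {α y'} (hs : st₂ y α y') :
    ∃ x', st₁ x α x' ∧ Bisimilar st₁ t₁ st₂ t₂ x' y' := by
  obtain ⟨R, hR, hxy⟩ := h
  obtain ⟨x', hx', hr⟩ := (hR x y hxy).2.1 α y' hs
  exact ⟨x', hx', R, hR, hr⟩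

lemma bisim_term (h : Bisimilar st₁ t₁ st₂ t₂ x y) : t₁ x ↔ t₂ y := by
  obtain ⟨R, hR, hxy⟩ := h
  exact (hR x y hxy).2.2

end BisimGeneric

section Inversion

variable {γ : Act → Act → Option Act} {α : Act} {u : Expr Act}

lemma step_dl_inv (h : Step γ (dl : Expr Act) α u) : False := by cases h

lemma step_emp_inv (h : Step γ (emp : Expr Act) α u) : False := by cases h

lemma step_act_inv {o : Act} (h : Step γ (act o) α u) : α = o ∧ u = emp := by
  cases h; exact ⟨rfl, rfl⟩

lemma step_alt_inv {p q : Expr Act} (h : Step γ (alt p q) α u) :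
    Step γ p α u ∨ Step γ q α u := by
  cases h with
  | altl h => exact Or.inl h
  | altr h => exact Or.inr h

lemma step_seq_inv {p q : Expr Act} (h : Step γ (seq p q) α u) :
    (∃ p', Step γ p α p' ∧ u = seq p' q) ∨ (Term p ∧ Step γ q α u) := by
  cases h with
  | seql h => exact Or.inl ⟨_, h, rfl⟩
  | seqr ht h => exact Or.inr ⟨ht, h⟩

lemma step_star_inv {p : Expr Act} (h : Step γ (star p) α u) :
    ∃ p', Step γ p α p' ∧ u = seq p' (star p) := by
  cases h with
  | star h => exact ⟨_, h, rfl⟩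

lemma step_par_inv {p q : Expr Act} (h : Step γ (par p q) α u) :
    (∃ p', Step γ p α p' ∧ u = par p' q) ∨ (∃ q', Step γ q α q' ∧ u = par p q') ∨
      (∃ p' q' β β', Step γ p β p' ∧ Step γ q β' q' ∧ γ β β' = some α ∧ u = par p' q') := by
  cases h with
  | parl h => exact Or.inl ⟨_, h, rfl⟩
  | parr h => exact Or.inr (Or.inl ⟨_, h, rfl⟩)
  | comm h₁ h₂ hγ => exact Or.inr (Or.inr ⟨_, _, _, _, h₁, h₂, hγ, rfl⟩)

lemma step_par_inv_gz {p q : Expr Act} (h : Step gz (par p q) α u) :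
    (∃ p', Step gz p α p' ∧ u = par p' q) ∨ (∃ q', Step gz q α q' ∧ u = par p q') := by
  rcases step_par_inv h with h | h | ⟨_, _, _, _, _, _, hγ, _⟩
  · exact Or.inl h
  · exact Or.inr h
  · exact absurd hγ (by simp [gz])

lemma term_dl_inv (h : Term (dl : Expr Act)) : False := by cases h

lemma term_act_inv {o : Act} (h : Term (act o : Expr Act)) : False := by cases h

lemma term_seq_inv {p q : Expr Act} (h : Term (seq p q)) : Term p ∧ Term q := by
  cases h with
  | seq h₁ h₂ => exact ⟨h₁, h₂⟩

lemma term_alt_inv {p q : Expr Act} (h : Term (alt p q)) : Term p ∨ Term q := by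
  cases h with
  | altl h => exact Or.inl h
  | altr h => exact Or.inr h

lemma term_par_inv {p q : Expr Act} (h : Term (par p q)) : Term p ∧ Term q := by
  cases h with
  | par h₁ h₂ => exact ⟨h₁, h₂⟩

end Inversion

/-- bisimilarity inside the PA space -/
def PB (x y : Expr Act) : Prop := Bisimilar (Step gz) Term (Step gz) Term x y


lemma pb_refl (x : Expr Act) : PB x x :=
  ⟨Eq, by rintro s t rfl; exact ⟨fun α s' h => ⟨s', h, rfl⟩, fun α s' h => ⟨s', h, rfl⟩, Iff.rfl⟩, rfl⟩

lemma pb_assoc (p q r : Expr Act) : PB (seq (seq p q) r) (seq p (seq q r)) := by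
  refine ⟨fun x y => (∃ p', x = seq (seq p' q) r ∧ y = seq p' (seq q r)) ∨ x = y, ?_,
    Or.inl ⟨p, rfl, rfl⟩⟩
  rintro x y (⟨p', rfl, rfl⟩ | rfl)
  · refine ⟨?_, ?_, ?_⟩
    · intro α x' hx'
      rcases step_seq_inv hx' with ⟨t, ht, rfl⟩ | ⟨htm, hr⟩
      · rcases step_seq_inv ht with ⟨p'', hp'', rfl⟩ | ⟨htp, hq⟩
        · exact ⟨seq p'' (seq q r), Step.seql hp'', Or.inl ⟨p'', rfl, rfl⟩⟩
        · exact ⟨seq t r, Step.seqr htp (Step.seql hq), Or.inr rfl⟩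
      · rcases term_seq_inv htm with ⟨h1, h2⟩
        exact ⟨x', Step.seqr h1 (Step.seqr h2 hr), Or.inr rfl⟩
    · intro α y' hy'
      rcases step_seq_inv hy' with ⟨p'', hp'', rfl⟩ | ⟨htp, hqr⟩
      · exact ⟨seq (seq p'' q) r, Step.seql (Step.seql hp''), Or.inl ⟨p'', rfl, rfl⟩⟩
      · rcases step_seq_inv hqr with ⟨q', hq, rfl⟩ | ⟨htq, hr⟩
        · exact ⟨seq q' r, Step.seql (Step.seqr htp hq), Or.inr rfl⟩
        · exact ⟨y', Step.seqr (Term.seq htp htq) hr, Or.inr rfl⟩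
    · constructor
      · intro h
        rcases term_seq_inv h with ⟨h1, h2⟩
        rcases term_seq_inv h1 with ⟨h3, h4⟩
        exact Term.seq h3 (Term.seq h4 h2)
      · intro h
        rcases term_seq_inv h with ⟨h1, h2⟩
        rcases term_seq_inv h2 with ⟨h3, h4⟩
        exact Term.seq (Term.seq h1 h3) h4
  · exact ⟨fun α s' h => ⟨s', h, Or.inr rfl⟩, fun α s' h => ⟨s', h, Or.inr rfl⟩, Iff.rfl⟩

lemma pb_congr_seq {x y : Expr Act} (h : PB x y) (r : Expr Act) : PB (seq x r) (seq y r) := by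
  obtain ⟨R, hR, hxy⟩ := h
  refine ⟨fun s t => (∃ x' y', R x' y' ∧ s = seq x' r ∧ t = seq y' r) ∨ s = t, ?_,
    Or.inl ⟨x, y, hxy, rfl, rfl⟩⟩
  rintro s t (⟨x', y', hr, rfl, rfl⟩ | rfl)
  · obtain ⟨fwd, bwd, tm⟩ := hR x' y' hr
    refine ⟨?_, ?_, ?_⟩
    · intro α s' hs'
      rcases step_seq_inv hs' with ⟨x'', hx'', rfl⟩ | ⟨htm, hrr⟩
      · obtain ⟨y'', hy'', hr'⟩ := fwd α x'' hx''
        exact ⟨seq y'' r, Step.seql hy'', Or.inl ⟨x'', y'', hr', rfl, rfl⟩⟩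
      · exact ⟨s', Step.seqr (tm.mp htm) hrr, Or.inr rfl⟩
    · intro α t' ht'
      rcases step_seq_inv ht' with ⟨y'', hy'', rfl⟩ | ⟨htm, hrr⟩
      · obtain ⟨x'', hx'', hr'⟩ := bwd α y'' hy''
        exact ⟨seq x'' r, Step.seql hx'', Or.inl ⟨x'', y'', hr', rfl, rfl⟩⟩
      · exact ⟨t', Step.seqr (tm.mpr htm) hrr, Or.inr rfl⟩
    · constructor
      · intro h; rcases term_seq_inv h with ⟨h1, h2⟩; exact Term.seq (tm.mp h1) h2
      · intro h; rcases term_seq_inv h with ⟨h1, h2⟩; exact Term.seq (tm.mpr h1) h2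
  · exact ⟨fun α s' h => ⟨s', h, Or.inr rfl⟩, fun α s' h => ⟨s', h, Or.inr rfl⟩, Iff.rfl⟩

lemma pb_seq_emp (x : Expr Act) : PB (seq x emp) x := by
  refine ⟨fun s t => s = seq t emp, ?_, rfl⟩
  rintro s t rfl
  refine ⟨?_, ?_, ?_⟩
  · intro α s' hs'
    rcases step_seq_inv hs' with ⟨t', ht', rfl⟩ | ⟨_, hrr⟩
    · exact ⟨t', ht', rfl⟩
    · exact absurd hrr step_emp_inv
  · intro α t' ht'
    exact ⟨seq t' emp, Step.seql ht', rfl⟩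
  · constructor
    · intro h; exact (term_seq_inv h).1
    · intro h; exact Term.seq h Term.emp

lemma pb_par_unit {w : Expr Act} (hw : ∀ α w', ¬ Step gz w α w') (htw : Term w) (x : Expr Act) :
    PB (par x w) x := by
  refine ⟨fun s t => s = par t w, ?_, rfl⟩
  rintro s t rfl
  refine ⟨?_, ?_, ?_⟩
  · intro α s' hs'
    rcases step_par_inv_gz hs' with ⟨t', ht', rfl⟩ | ⟨w', hw', _⟩
    · exact ⟨t', ht', rfl⟩
    · exact absurd hw' (hw α w')
  · intro α t' ht'
    exact ⟨par t' w, Step.parl ht', rfl⟩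
  · constructor
    · intro h; exact (term_par_inv h).1
    · intro h; exact Term.par h htw

lemma pb_par_dl {w : Expr Act} (hw : ∀ α w', ¬ Step gz w α w') (htw : ¬ Term w) (x : Expr Act) :
    PB (par x w) (seq x dl) := by
  refine ⟨fun s t => ∃ v, s = par v w ∧ t = seq v dl, ?_, ⟨x, rfl, rfl⟩⟩
  rintro s t ⟨v, rfl, rfl⟩
  refine ⟨?_, ?_, ?_⟩
  · intro α s' hs'
    rcases step_par_inv_gz hs' with ⟨v', hv', rfl⟩ | ⟨w', hw', _⟩
    · exact ⟨seq v' dl, Step.seql hv', v', rfl, rfl⟩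
    · exact absurd hw' (hw α w')
  · intro α t' ht'
    rcases step_seq_inv ht' with ⟨v', hv', rfl⟩ | ⟨_, hdd⟩
    · exact ⟨par v' w, Step.parl hv', v', rfl, rfl⟩
    · exact absurd hdd step_dl_inv
  · constructor
    · intro h; exact absurd (term_par_inv h).2 htw
    · intro h; exact absurd (term_seq_inv h).2 term_dl_inv

lemma pb_par_comm (x y : Expr Act) : PB (par x y) (par y x) := by
  refine ⟨fun s t => ∃ v w, s = par v w ∧ t = par w v, ?_, ⟨x, y, rfl, rfl⟩⟩
  rintro s t ⟨v, w, rfl, rfl⟩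
  refine ⟨?_, ?_, ?_⟩
  · intro α s' hs'
    rcases step_par_inv_gz hs' with ⟨v', hv', rfl⟩ | ⟨w', hw', rfl⟩
    · exact ⟨par w v', Step.parr hv', v', w, rfl, rfl⟩
    · exact ⟨par w' v, Step.parl hw', v, w', rfl, rfl⟩
  · intro α t' ht'
    rcases step_par_inv_gz ht' with ⟨w', hw', rfl⟩ | ⟨v', hv', rfl⟩
    · exact ⟨par v w', Step.parr hw', v, w', rfl, rfl⟩
    · exact ⟨par v' w, Step.parl hv', v', w, rfl, rfl⟩
  · constructor
    · intro h; rcases term_par_inv h with ⟨h1, h2⟩; exact Term.par h2 h1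
    · intro h; rcases term_par_inv h with ⟨h1, h2⟩; exact Term.par h2 h1

/-- the six-state machine -/
inductive MS : Type
  | X0 | X1 | Y0 | Y1 | Z | T

open MS

/-- bundled distinctness -/
structure Dist (a b c d e : Act) : Prop where
  ab : a ≠ b
  ac : a ≠ c
  ad : a ≠ d
  ae : a ≠ e
  bc : b ≠ c
  bd : b ≠ d
  be : b ≠ e
  cd : c ≠ d
  ce : c ≠ e
  de : d ≠ e

variable (a b c d e : Act)

def MStep : MS → Act → MS → Prop
  | X0, α, m => (α = a ∧ m = X1) ∨ (α = c ∧ m = Y0) ∨ (α = d ∧ m = Z)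
  | X1, α, m => (α = b ∧ m = X0) ∨ (α = c ∧ m = Y1) ∨ (α = e ∧ m = Y0)
  | Y0, α, m => (α = a ∧ m = Y1) ∨ (α = d ∧ m = T)
  | Y1, α, m => (α = b ∧ m = Y0)
  | Z,  α, m => (α = c ∧ m = T)
  | T,  _, _ => False

def MTerm : MS → Prop := fun m => m = T

/-- bisimilarity of a PA expression with a machine state -/
def Sim (q : Expr Act) (m : MS) : Prop :=
  Bisimilar (Step gz) Term (MStep a b c d e) MTerm q m

variable {a b c d e}

lemma sim_fwd {q m α q'} (h : Sim a b c d e q m) (hs : Step gz q α q') :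
    ∃ m', MStep a b c d e m α m' ∧ Sim a b c d e q' m' := bisim_fwd h hs

lemma sim_bwd {q m α m'} (h : Sim a b c d e q m) (hm : MStep a b c d e m α m') :
    ∃ q', Step gz q α q' ∧ Sim a b c d e q' m' := bisim_bwd h hm

lemma sim_term {q m} (h : Sim a b c d e q m) : Term q ↔ MTerm m := bisim_term h

lemma sim_of_pb {x y : Expr Act} {m} (h : PB x y) (hy : Sim a b c d e y m) :
    Sim a b c d e x m := bisim_comp h hy

section Rigid

variable (hd : Dist a b c d e)
include hd

private lemma kill {q m₁ m₂ α m'} (h₁ : Sim a b c d e q m₁) (h₂ : Sim a b c d e q m₂)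
    (w : MStep a b c d e m₂ α m') (no : ∀ m'', ¬ MStep a b c d e m₁ α m'') : False := by
  obtain ⟨q', hq', -⟩ := sim_bwd h₂ w
  obtain ⟨m'', hm'', -⟩ := sim_fwd h₁ hq'
  exact no m'' hm''

omit hd in
private lemma simT_term {q m} (h : Sim a b c d e q m) (hm : m = T) : Term q :=
  (sim_term h).mpr hm

lemma simUnique {q m₁ m₂} (h₁ : Sim a b c d e q m₁) (h₂ : Sim a b c d e q m₂) : m₁ = m₂ := by
  have noB_X0 : ∀ m'', ¬ MStep a b c d e X0 b m'' := by
    rintro m'' (⟨h, -⟩ | ⟨h, -⟩ | ⟨h, -⟩)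
    exacts [hd.ab h.symm, hd.bc h, hd.bd h]
  have noA_Y1 : ∀ m'', ¬ MStep a b c d e Y1 a m'' := by
    rintro m'' ⟨h, -⟩; exact hd.ab h
  have noC_Y1 : ∀ m'', ¬ MStep a b c d e Y1 c m'' := by
    rintro m'' ⟨h, -⟩; exact hd.bc h.symm
  have noB_Y0 : ∀ m'', ¬ MStep a b c d e Y0 b m'' := by
    rintro m'' (⟨h, -⟩ | ⟨h, -⟩)
    exacts [hd.ab h.symm, hd.bd h]
  have noC_Y0 : ∀ m'', ¬ MStep a b c d e Y0 c m'' := by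
    rintro m'' (⟨h, -⟩ | ⟨h, -⟩)
    exacts [hd.ac h.symm, hd.cd h]
  have noA_Z : ∀ m'', ¬ MStep a b c d e Z a m'' := by
    rintro m'' ⟨h, -⟩; exact hd.ac h
  have noB_Z : ∀ m'', ¬ MStep a b c d e Z b m'' := by
    rintro m'' ⟨h, -⟩; exact hd.bc h
  have noT : ∀ α (m'' : MS), ¬ MStep a b c d e T α m'' := by rintro α m'' ⟨⟩
  have wX0a : MStep a b c d e X0 a X1 := Or.inl ⟨rfl, rfl⟩
  have wX0c : MStep a b c d e X0 c Y0 := Or.inr (Or.inl ⟨rfl, rfl⟩)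
  have wX1b : MStep a b c d e X1 b X0 := Or.inl ⟨rfl, rfl⟩
  have wX1c : MStep a b c d e X1 c Y1 := Or.inr (Or.inl ⟨rfl, rfl⟩)
  have wY0a : MStep a b c d e Y0 a Y1 := Or.inl ⟨rfl, rfl⟩
  have wY1b : MStep a b c d e Y1 b Y0 := ⟨rfl, rfl⟩
  have wZc : MStep a b c d e Z c T := ⟨rfl, rfl⟩
  have hT : ∀ {m}, m ≠ T → ¬ Term q → ¬ Sim a b c d e q T := by
    intro m hm hnt hsim
    exact hnt ((sim_term hsim).mpr rfl)
  -- termination facts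
  cases m₁ <;> cases m₂
  case X0.X0 => rfl
  case X1.X1 => rfl
  case Y0.Y0 => rfl
  case Y1.Y1 => rfl
  case Z.Z => rfl
  case T.T => rfl
  -- pairs with T : termination mismatch
  case X0.T => exact absurd ((sim_term h₂).mpr rfl) (fun ht => by cases (sim_term h₁).mp ht)
  case X1.T => exact absurd ((sim_term h₂).mpr rfl) (fun ht => by cases (sim_term h₁).mp ht)
  case Y0.T => exact absurd ((sim_term h₂).mpr rfl) (fun ht => by cases (sim_term h₁).mp ht)
  case Y1.T => exact absurd ((sim_term h₂).mpr rfl) (fun ht => by cases (sim_term h₁).mp ht)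
  case Z.T => exact absurd ((sim_term h₂).mpr rfl) (fun ht => by cases (sim_term h₁).mp ht)
  case T.X0 => exact absurd ((sim_term h₁).mpr rfl) (fun ht => by cases (sim_term h₂).mp ht)
  case T.X1 => exact absurd ((sim_term h₁).mpr rfl) (fun ht => by cases (sim_term h₂).mp ht)
  case T.Y0 => exact absurd ((sim_term h₁).mpr rfl) (fun ht => by cases (sim_term h₂).mp ht)
  case T.Y1 => exact absurd ((sim_term h₁).mpr rfl) (fun ht => by cases (sim_term h₂).mp ht)
  case T.Z => exact absurd ((sim_term h₁).mpr rfl) (fun ht => by cases (sim_term h₂).mp ht)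
  -- non-T pairs
  case X0.X1 => exact absurd (kill hd h₁ h₂ wX1b noB_X0) not_false
  case X1.X0 => exact absurd (kill hd h₂ h₁ wX1b noB_X0) not_false
  case X0.Y0 => exact absurd (kill hd h₂ h₁ wX0c noC_Y0) not_false
  case Y0.X0 => exact absurd (kill hd h₁ h₂ wX0c noC_Y0) not_false
  case X0.Y1 => exact absurd (kill hd h₂ h₁ wX0a noA_Y1) not_false
  case Y1.X0 => exact absurd (kill hd h₁ h₂ wX0a noA_Y1) not_false
  case X0.Z => exact absurd (kill hd h₂ h₁ wX0a noA_Z) not_false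
  case Z.X0 => exact absurd (kill hd h₁ h₂ wX0a noA_Z) not_false
  case X1.Y0 => exact absurd (kill hd h₂ h₁ wX1b noB_Y0) not_false
  case Y0.X1 => exact absurd (kill hd h₁ h₂ wX1b noB_Y0) not_false
  case X1.Y1 => exact absurd (kill hd h₂ h₁ wX1c noC_Y1) not_false
  case Y1.X1 => exact absurd (kill hd h₁ h₂ wX1c noC_Y1) not_false
  case X1.Z => exact absurd (kill hd h₂ h₁ wX1b noB_Z) not_false
  case Z.X1 => exact absurd (kill hd h₁ h₂ wX1b noB_Z) not_false
  case Y0.Y1 => exact absurd (kill hd h₂ h₁ wY0a noA_Y1) not_false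
  case Y1.Y0 => exact absurd (kill hd h₁ h₂ wY0a noA_Y1) not_false
  case Y0.Z => exact absurd (kill hd h₂ h₁ wY0a noA_Z) not_false
  case Z.Y0 => exact absurd (kill hd h₁ h₂ wY0a noA_Z) not_false
  case Y1.Z => exact absurd (kill hd h₂ h₁ wY1b noB_Z) not_false
  case Z.Y1 => exact absurd (kill hd h₁ h₂ wY1b noB_Z) not_false

lemma patt {u u' R : Expr Act} {m m' : MS} {lab : Act}
    (h1 : Sim a b c d e (seq u R) m) (h2 : Sim a b c d e (seq u' R) m')
    (hm : m = X0 ∨ m = X1) (hm' : m' = X0 ∨ m' = X1)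
    (hs : Step gz u lab u') :
    (m = X0 ∧ m' = X1 ∧ lab = a) ∨ (m = X1 ∧ m' = X0 ∧ lab = b) := by
  obtain ⟨m'', hm'', hsim⟩ := sim_fwd h1 (Step.seql hs : Step gz (seq u R) lab (seq u' R))
  have heq : m'' = m' := simUnique hd hsim h2
  subst heq
  rcases hm with rfl | rfl
  · rcases hm'' with ⟨hl, hm2⟩ | ⟨hl, hm2⟩ | ⟨hl, hm2⟩
    · exact Or.inl ⟨rfl, hm2, hl⟩
    · rcases hm' with h | h <;> (rw [hm2] at h; cases h)
    · rcases hm' with h | h <;> (rw [hm2] at h; cases h)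
  · rcases hm'' with ⟨hl, hm2⟩ | ⟨hl, hm2⟩ | ⟨hl, hm2⟩
    · exact Or.inr ⟨rfl, hm2, hl⟩
    · rcases hm' with h | h <;> (rw [hm2] at h; cases h)
    · rcases hm' with h | h <;> (rw [hm2] at h; cases h)

end Rigid

section StepFacts

lemma noEncap_step {γ : Act → Act → Option Act} {p q : Expr Act} {α : Act}
    (h : Step γ p α q) (hp : NoEncap p) : NoEncap q := by
  induction h with
  | act => trivial
  | altl h ih => exact ih hp.1
  | altr h ih => exact ih hp.2
  | seql h ih => exact ⟨ih hp.1, hp.2⟩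
  | seqr ht h ih => exact ih hp.2
  | star h ih => exact ⟨ih hp, hp⟩
  | parl h ih => exact ⟨ih hp.1, hp.2⟩
  | parr h ih => exact ⟨hp.1, ih hp.2⟩
  | comm h₁ h₂ hγ ih₁ ih₂ => exact ⟨ih₁ hp.1, ih₂ hp.2⟩
  | encap h hH ih => exact absurd hp id

lemma noEncap_reach {p q : Expr Act} (h : Reach gz p q) (hp : NoEncap p) : NoEncap q := by
  induction h with
  | refl => exact hp
  | tail hr hs ih => exact noEncap_step hs.choose_spec ih

lemma step_shape {p q : Expr Act} {α : Act} (h : Step gz p α q) (hp : NoEncap p) :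
    q = emp ∨ (∃ x y, q = seq x y) ∨ (∃ x y, q = par x y) := by
  induction h with
  | act => exact Or.inl rfl
  | altl h ih => exact ih hp.1
  | altr h ih => exact ih hp.2
  | seql h ih => exact Or.inr (Or.inl ⟨_, _, rfl⟩)
  | seqr ht h ih => exact ih hp.2
  | star h ih => exact Or.inr (Or.inl ⟨_, _, rfl⟩)
  | parl h ih => exact Or.inr (Or.inr ⟨_, _, rfl⟩)
  | parr h ih => exact Or.inr (Or.inr ⟨_, _, rfl⟩)
  | comm h₁ h₂ hγ => exact absurd hγ (by simp [gz])
  | encap h hH ih => exact absurd hp id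

end StepFacts

section ReachFacts

lemma reach_step {p q r : Expr Act} {α : Act} (h : Reach gz p q) (hs : Step gz q α r) :
    Reach gz p r := Relation.ReflTransGen.tail h ⟨α, hs⟩

lemma reach_single {p q : Expr Act} {α : Act} (hs : Step gz p α q) : Reach gz p q :=
  Relation.ReflTransGen.single ⟨α, hs⟩

lemma reach_dl {x : Expr Act} (h : Reach gz dl x) : x = dl := by
  induction h with
  | refl => rfl
  | tail hr hs ih => subst ih; exact absurd hs.choose_spec step_dl_inv

lemma reach_emp {x : Expr Act} (h : Reach gz emp x) : x = emp := by
  induction h with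
  | refl => rfl
  | tail hr hs ih => subst ih; exact absurd hs.choose_spec step_emp_inv

lemma reach_act {o : Act} {x : Expr Act} (h : Reach gz (act o) x) : x = act o ∨ x = emp := by
  induction h with
  | refl => exact Or.inl rfl
  | tail hr hs ih =>
    rcases ih with rfl | rfl
    · exact Or.inr (step_act_inv hs.choose_spec).2
    · exact absurd hs.choose_spec step_emp_inv

lemma reach_alt {p q x : Expr Act} (h : Reach gz (alt p q) x) :
    x = alt p q ∨ Reach gz p x ∨ Reach gz q x := by
  induction h with
  | refl => exact Or.inl rfl
  | tail hr hs ih =>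
    rcases ih with rfl | hp | hq
    · rcases step_alt_inv hs.choose_spec with h | h
      · exact Or.inr (Or.inl (reach_single h))
      · exact Or.inr (Or.inr (reach_single h))
    · exact Or.inr (Or.inl (reach_step hp hs.choose_spec))
    · exact Or.inr (Or.inr (reach_step hq hs.choose_spec))

lemma reach_seq {p r x : Expr Act} (h : Reach gz (seq p r) x) :
    (∃ p', Reach gz p p' ∧ x = seq p' r) ∨ (∃ α r₁, Step gz r α r₁ ∧ Reach gz r₁ x) := by
  induction h with
  | refl => exact Or.inl ⟨p, Relation.ReflTransGen.refl, rfl⟩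
  | tail hr hs ih =>
    rcases ih with ⟨p', hp', rfl⟩ | ⟨α, r₁, h₁, h₂⟩
    · rcases step_seq_inv hs.choose_spec with ⟨p'', hp'', rfl⟩ | ⟨ht, hrr⟩
      · exact Or.inl ⟨p'', reach_step hp' hp'', rfl⟩
      · exact Or.inr ⟨_, _, hrr, Relation.ReflTransGen.refl⟩
    · exact Or.inr ⟨α, r₁, h₁, reach_step h₂ hs.choose_spec⟩

lemma reach_star {s x : Expr Act} (h : Reach gz (star s) x) :
    x = star s ∨ ∃ y, Reach gz s y ∧ x = seq y (star s) := by
  induction h with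
  | refl => exact Or.inl rfl
  | tail hr hs ih =>
    rcases ih with rfl | ⟨y, hy, rfl⟩
    · obtain ⟨s', hs', rfl⟩ := step_star_inv hs.choose_spec
      exact Or.inr ⟨s', reach_single hs', rfl⟩
    · rcases step_seq_inv hs.choose_spec with ⟨y', hy', rfl⟩ | ⟨ht, hrr⟩
      · exact Or.inr ⟨y', reach_step hy hy', rfl⟩
      · obtain ⟨s', hs', rfl⟩ := step_star_inv hrr
        exact Or.inr ⟨s', reach_single hs', rfl⟩

lemma reach_par {p q x : Expr Act} (h : Reach gz (par p q) x) :
    ∃ p' q', Reach gz p p' ∧ Reach gz q q' ∧ x = par p' q' := by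
  induction h with
  | refl => exact ⟨p, q, Relation.ReflTransGen.refl, Relation.ReflTransGen.refl, rfl⟩
  | tail hr hs ih =>
    obtain ⟨p', q', hp', hq', rfl⟩ := ih
    rcases step_par_inv_gz hs.choose_spec with ⟨p'', hp'', rfl⟩ | ⟨q'', hq'', rfl⟩
    · exact ⟨p'', q', reach_step hp' hp'', hq', rfl⟩
    · exact ⟨p', q'', hp', reach_step hq' hq'', rfl⟩

lemma reach_encap {H : Set Act} {p x : Expr Act} (h : Reach gz (encap H p) x) :
    ∃ p', Reach gz p p' ∧ x = encap H p' := by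
  induction h with
  | refl => exact ⟨p, Relation.ReflTransGen.refl, rfl⟩
  | tail hr hs ih =>
    obtain ⟨p', hp', rfl⟩ := ih
    obtain ⟨α, hstep⟩ := hs
    cases hstep with
    | encap h hH => exact ⟨_, reach_step hp' h, rfl⟩

lemma reach_finite (p : Expr Act) : {x | Reach gz p x}.Finite := by
  induction p with
  | dl => exact (Set.finite_singleton dl).subset (fun x hx => reach_dl hx)
  | emp => exact (Set.finite_singleton emp).subset (fun x hx => reach_emp hx)
  | act o =>
    exact ((Set.finite_singleton emp).insert (act o)).subset
      (fun x hx => by rcases reach_act hx with rfl | rfl <;> simp)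
  | seq p r ihp ihr =>
    refine ((ihp.image (fun y => seq y r)).union ihr).subset ?_
    intro x hx
    rcases reach_seq hx with ⟨p', hp', rfl⟩ | ⟨α, r₁, h₁, h₂⟩
    · exact Or.inl ⟨p', hp', rfl⟩
    · exact Or.inr ((reach_single h₁).trans h₂)
  | alt p q ihp ihq =>
    refine (((ihp.union ihq).insert (alt p q))).subset ?_
    intro x hx
    rcases reach_alt hx with rfl | h | h
    · exact Or.inl rfl
    · exact Or.inr (Or.inl h)
    · exact Or.inr (Or.inr h)
  | star s ihs =>
    refine ((ihs.image (fun y => seq y (star s))).insert (star s)).subset ?_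
    intro x hx
    rcases reach_star hx with rfl | ⟨y, hy, rfl⟩
    · exact Or.inl rfl
    · exact Or.inr ⟨y, hy, rfl⟩
  | par p q ihp ihq =>
    refine (Set.Finite.image2 par ihp ihq).subset ?_
    intro x hx
    obtain ⟨p', q', hp', hq', rfl⟩ := reach_par hx
    exact Set.mem_image2_of_mem hp' hq'
  | encap H p ihp =>
    refine (ihp.image (encap H)).subset ?_
    intro x hx
    obtain ⟨p', hp', rfl⟩ := reach_encap hx
    exact ⟨p', hp', rfl⟩

end ReachFacts

section StarContra

open MS

variable {a b c d e : Act}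

lemma starContra (hd : Dist a b c d e) {s x s' R : Expr Act} {lab : Act} {m m' : MS}
    (hx : Term x) (hs : Step gz s lab s')
    (h1 : Sim a b c d e (seq (seq x (star s)) R) m)
    (h2 : Sim a b c d e (seq (seq s' (star s)) R) m')
    (hm : m = X0 ∨ m = X1) (hm' : m' = X0 ∨ m' = X1) : False := by
  have hstepF : ∀ {w : Expr Act}, Term w →
      Step gz (seq (seq w (star s)) R) lab (seq (seq s' (star s)) R) :=
    fun htw => Step.seql (Step.seqr htw (Step.star hs))
  have hTR : ¬ Term R := by
    intro hR
    have ht : Term (seq (seq x (star s)) R) := Term.seq (Term.seq hx Term.star) hR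
    have := (sim_term h1).mp ht
    rcases hm with rfl | rfl <;> exact MS.noConfusion this
  have R2 : ∀ w : Expr Act, ¬ Sim a b c d e (seq (seq w (star s)) R) T :=
    fun w hw => hTR (term_seq_inv ((sim_term hw).mpr rfl)).2
  have Finv : ∀ {w α : _} {t : Expr Act}, Step gz (seq (seq w (star s)) R) α t →
      (∃ w', Step gz w α w' ∧ t = seq (seq w' (star s)) R) ∨
      (Term w ∧ ∃ s'', Step gz s α s'' ∧ t = seq (seq s'' (star s)) R) ∨
      (Term w ∧ Step gz R α t) := by
    intro w α t h
    rcases step_seq_inv h with ⟨i, hi, rfl⟩ | ⟨ht, hR⟩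
    · rcases step_seq_inv hi with ⟨w', hw', rfl⟩ | ⟨htw, hst⟩
      · exact Or.inl ⟨w', hw', rfl⟩
      · obtain ⟨s'', hs'', rfl⟩ := step_star_inv hst
        exact Or.inr (Or.inl ⟨htw, s'', hs'', rfl⟩)
    · exact Or.inr (Or.inr ⟨(term_seq_inv ht).1, hR⟩)
  have wX0d : MStep a b c d e X0 d Z := Or.inr (Or.inr ⟨rfl, rfl⟩)
  have wX1e : MStep a b c d e X1 e Y0 := Or.inr (Or.inr ⟨rfl, rfl⟩)
  have wY0d : MStep a b c d e Y0 d T := Or.inr ⟨rfl, rfl⟩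
  have wZc : MStep a b c d e Z c T := ⟨rfl, rfl⟩
  have hp := patt hd h1 h2 hm hm' (Step.seqr hx (Step.star hs))
  rcases hp with ⟨rfl, rfl, hlab⟩ | ⟨rfl, rfl, hlab⟩
  · -- m = X0, m' = X1, lab = a
    rw [hlab] at hstepF
    have innerZ : ∀ z : Expr Act, ¬ Sim a b c d e (seq (seq z (star s)) R) Z := by
      intro z hz
      obtain ⟨W, hW, simWT⟩ := sim_bwd hz wZc
      rcases Finv hW with ⟨w', -, rfl⟩ | ⟨-, ⟨s'', -, rfl⟩⟩ | ⟨htz, -⟩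
      · exact R2 _ simWT
      · exact R2 _ simWT
      · obtain ⟨m'', hm'', -⟩ := sim_fwd hz (hstepF htz)
        exact hd.ac hm''.1
    obtain ⟨P, hP, simPZ⟩ := sim_bwd h1 wX0d
    rcases Finv hP with ⟨z, -, rfl⟩ | ⟨-, ⟨z, -, rfl⟩⟩ | ⟨-, hRd⟩
    · exact innerZ z simPZ
    · exact innerZ z simPZ
    by_cases hts' : Term s'
    · have hst : Step gz (seq (seq s' (star s)) R) d P := Step.seqr (Term.seq hts' Term.star) hRd
      obtain ⟨m'', hm'', -⟩ := sim_fwd h2 hst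
      rcases hm'' with ⟨h', -⟩ | ⟨h', -⟩ | ⟨h', -⟩
      exacts [hd.bd h'.symm, hd.cd h'.symm, hd.de h']
    · obtain ⟨E, hE, simEY0⟩ := sim_bwd h2 wX1e
      rcases Finv hE with ⟨z, -, rfl⟩ | ⟨hts'', -⟩ | ⟨hts'', -⟩
      · obtain ⟨W, hW, simWT⟩ := sim_bwd simEY0 wY0d
        rcases Finv hW with ⟨w', -, rfl⟩ | ⟨-, ⟨s'', -, rfl⟩⟩ | ⟨htz, -⟩
        · exact R2 _ simWT
        · exact R2 _ simWT
        · have hst : Step gz (seq (seq z (star s)) R) d P :=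
            Step.seqr (Term.seq htz Term.star) hRd
          obtain ⟨m'', hm'', simPm''⟩ := sim_fwd simEY0 hst
          rcases hm'' with ⟨h', -⟩ | ⟨-, rfl⟩
          · exact hd.ad h'.symm
          · exact MS.noConfusion (simUnique hd simPZ simPm'')
      · exact hts' hts''
      · exact hts' hts''
  · -- m = X1, m' = X0, lab = b
    rw [hlab] at hstepF
    have innerY0 : ∀ z : Expr Act, ¬ Sim a b c d e (seq (seq z (star s)) R) Y0 := by
      intro z hz
      obtain ⟨W, hW, simWT⟩ := sim_bwd hz wY0d
      rcases Finv hW with ⟨w', -, rfl⟩ | ⟨-, ⟨s'', -, rfl⟩⟩ | ⟨htz, -⟩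
      · exact R2 _ simWT
      · exact R2 _ simWT
      · obtain ⟨m'', hm'', -⟩ := sim_fwd hz (hstepF htz)
        rcases hm'' with ⟨h', -⟩ | ⟨h', -⟩
        exacts [hd.ab h'.symm, hd.bd h']
    obtain ⟨E, hE, simEY0⟩ := sim_bwd h1 wX1e
    rcases Finv hE with ⟨z, -, rfl⟩ | ⟨-, ⟨z, -, rfl⟩⟩ | ⟨-, hRe⟩
    · exact innerY0 z simEY0
    · exact innerY0 z simEY0
    by_cases hts' : Term s'
    · have hst : Step gz (seq (seq s' (star s)) R) e E := Step.seqr (Term.seq hts' Term.star) hRe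
      obtain ⟨m'', hm'', -⟩ := sim_fwd h2 hst
      rcases hm'' with ⟨h', -⟩ | ⟨h', -⟩ | ⟨h', -⟩
      exacts [hd.ae h'.symm, hd.ce h'.symm, hd.de h'.symm]
    · obtain ⟨W, hW, simWZ⟩ := sim_bwd h2 wX0d
      rcases Finv hW with ⟨sd, -, rfl⟩ | ⟨hts'', -⟩ | ⟨hts'', -⟩
      · obtain ⟨W₂, hW₂, simW₂T⟩ := sim_bwd simWZ wZc
        rcases Finv hW₂ with ⟨w', -, rfl⟩ | ⟨-, ⟨s'', -, rfl⟩⟩ | ⟨htsd, -⟩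
        · exact R2 _ simW₂T
        · exact R2 _ simW₂T
        · obtain ⟨m'', hm'', -⟩ := sim_fwd simWZ (hstepF htsd)
          exact hd.bc hm''.1
      · exact hts' hts''
      · exact hts' hts''

end StarContra

section CycleMachinery

open MS

def lft : Expr Act → Expr Act
  | .seq x _ => x
  | x => x

def plf : Expr Act → Expr Act
  | .par x _ => x
  | x => x

def prt : Expr Act → Expr Act
  | .par _ y => y
  | y => y

@[simp] lemma lft_seq (x y : Expr Act) : lft (seq x y) = x := rfl
@[simp] lemma plf_par (x y : Expr Act) : plf (par x y) = x := rfl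
@[simp] lemma prt_par (x y : Expr Act) : prt (par x y) = y := rfl

variable (a b c d e : Act)

/-- a cycle within the reachable states of `g`, all of whose states are,
sequenced with continuation `R`, bisimilar to `X0` or `X1`. -/
def IsCyc (R g : Expr Act) : Prop :=
  ∃ (n : ℕ) (u : ℕ → Expr Act) (lab : ℕ → Act),
    0 < n ∧ u n = u 0 ∧
    (∀ i, i < n → Step gz (u i) (lab i) (u (i + 1))) ∧
    (∀ i, i ≤ n → Reach gz g (u i)) ∧
    (∀ i, i ≤ n → Sim a b c d e (seq (u i) R) X0 ∨ Sim a b c d e (seq (u i) R) X1)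

variable {a b c d e}

lemma cycProp {n : ℕ} {u : ℕ → Expr Act} {lab : ℕ → Act}
    (hstep : ∀ i, i < n → Step gz (u i) (lab i) (u (i + 1))) (hwrap : u n = u 0)
    {z : Expr Act} {j : ℕ} (hj : j ≤ n) (hz : Reach gz z (u j)) :
    ∀ i, i ≤ n → Reach gz z (u i) := by
  have helper : ∀ (j₀ : ℕ), Reach gz z (u j₀) → ∀ t, j₀ + t ≤ n → Reach gz z (u (j₀ + t)) := by
    intro j₀ h₀ t
    induction t with
    | zero => intro _; exact h₀
    | succ t ih =>
      intro hle
      have h1 : j₀ + t < n := by omega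
      have := reach_step (ih (by omega)) (hstep (j₀ + t) h1)
      rw [show j₀ + (t+1) = (j₀ + t) + 1 by omega]
      exact this
  have hn' : Reach gz z (u n) := by
    have := helper j hz (n - j) (by omega)
    rwa [show j + (n - j) = n by omega] at this
  have h0 : Reach gz z (u 0) := by rw [← hwrap]; exact hn'
  intro i hi
  have := helper 0 h0 i (by omega)
  rwa [Nat.zero_add] at this

open Classical in
lemma cycClsEx (hd : Dist a b c d e) {R : Expr Act} {n : ℕ} {u : ℕ → Expr Act} {lab : ℕ → Act}
    (hstep : ∀ i, i < n → Step gz (u i) (lab i) (u (i + 1)))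
    (hGood : ∀ i, i ≤ n → Sim a b c d e (seq (u i) R) X0 ∨ Sim a b c d e (seq (u i) R) X1) :
    ∃ cls : ℕ → MS,
      (∀ i, i ≤ n → Sim a b c d e (seq (u i) R) (cls i)) ∧
      (∀ i, i ≤ n → cls i = X0 ∨ cls i = X1) ∧
      (∀ i, i < n →
        (cls i = X0 ∧ cls (i+1) = X1 ∧ lab i = a) ∨
        (cls i = X1 ∧ cls (i+1) = X0 ∧ lab i = b)) := by
  have hc1 : ∀ i, i ≤ n → Sim a b c d e (seq (u i) R)
      (if Sim a b c d e (seq (u i) R) X0 then X0 else X1) := by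
    intro i hi
    by_cases h : Sim a b c d e (seq (u i) R) X0
    · rw [if_pos h]; exact h
    · rw [if_neg h]; exact (hGood i hi).resolve_left h
  have hc2 : ∀ i, (if Sim a b c d e (seq (u i) R) X0 then X0 else X1) = X0 ∨
      (if Sim a b c d e (seq (u i) R) X0 then X0 else X1) = X1 := by
    intro i
    by_cases h : Sim a b c d e (seq (u i) R) X0
    · rw [if_pos h]; exact Or.inl rfl
    · rw [if_neg h]; exact Or.inr rfl
  refine ⟨fun i => if Sim a b c d e (seq (u i) R) X0 then X0 else X1, hc1, fun i _ => hc2 i, ?_⟩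
  intro i hi
  exact patt hd (hc1 i hi.le) (hc1 (i+1) hi) (hc2 i) (hc2 (i+1)) (hstep i hi)

lemma adjDiff {P : ℕ → Prop} {n i j : ℕ} (hi : i < n) (hj : j < n) (hPi : P i) (hPj : ¬ P j) :
    ∃ k, k + 1 < n ∧ ((P k ∧ ¬ P (k+1)) ∨ (¬ P k ∧ P (k+1))) := by
  by_contra hcon
  push_neg at hcon
  have same : ∀ k, k + 1 < n → (P k ↔ P (k+1)) := by
    intro k hk
    have := hcon k hk
    by_cases h1 : P k <;> by_cases h2 : P (k+1) <;> tauto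
  have all : ∀ m, m < n → (P 0 ↔ P m) := by
    intro m hm
    induction m with
    | zero => exact Iff.rfl
    | succ m ih => exact (ih (by omega)).trans (same m hm)
  exact hPj ((all j hj).mp ((all i hi).mpr hPi))

lemma parAllL (hd : Dist a b c d e) {v w R : Expr Act} {n : ℕ} {lv : ℕ → Expr Act}
    {lab : ℕ → Act}
    (hIH : ∀ R', ¬ IsCyc a b c d e R' v)
    (hn : 0 < n) (hwrap : lv n = lv 0)
    (hreach : ∀ i, i ≤ n → Reach gz v (lv i))
    (hstep : ∀ i, i < n → Step gz (lv i) (lab i) (lv (i + 1)))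
    (hGood : ∀ i, i ≤ n → Sim a b c d e (seq (par (lv i) w) R) X0 ∨
      Sim a b c d e (seq (par (lv i) w) R) X1) :
    False := by
  have wX0d : MStep a b c d e X0 d Z := Or.inr (Or.inr ⟨rfl, rfl⟩)
  have wX1e : MStep a b c d e X1 e Y0 := Or.inr (Or.inr ⟨rfl, rfl⟩)
  have wZc : MStep a b c d e Z c T := ⟨rfl, rfl⟩
  have hstepu : ∀ i, i < n → Step gz (par (lv i) w) (lab i) (par (lv (i+1)) w) :=
    fun i hi => Step.parl (hstep i hi)
  obtain ⟨cls, hcls, hcls01, hpatt⟩ := cycClsEx hd hstepu hGood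
  by_cases hw : ∃ β w', Step gz w β w'
  · obtain ⟨β₀, w₀', hwstep⟩ := hw
    -- every step of w is labelled c
    have wlab : ∀ {β : Act} {w' : Expr Act}, Step gz w β w' → β = c := by
      intro β w' hst
      have lift : ∀ i, i ≤ n → ∃ mi, MStep a b c d e (cls i) β mi := by
        intro i hi
        obtain ⟨mi, hmi, -⟩ := sim_fwd (hcls i hi) (Step.seql (Step.parr hst))
        exact ⟨mi, hmi⟩
      obtain ⟨m0, hm0⟩ := lift 0 (Nat.zero_le n)
      obtain ⟨m1, hm1⟩ := lift 1 hn
      rcases hpatt 0 hn with ⟨h0, h1, -⟩ | ⟨h0, h1, -⟩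
      · rw [h0] at hm0; rw [h1] at hm1
        rcases hm0 with ⟨h', -⟩ | ⟨h', -⟩ | ⟨h', -⟩ <;>
          rcases hm1 with ⟨h'', -⟩ | ⟨h'', -⟩ | ⟨h'', -⟩
        exacts [absurd (h'.symm.trans h'') hd.ab, absurd (h'.symm.trans h'') hd.ac,
          absurd (h'.symm.trans h'') hd.ae, absurd (h''.symm.trans h') hd.bc, h',
          absurd (h'.symm.trans h'') hd.ce, absurd (h''.symm.trans h') hd.bd,
          absurd (h''.symm.trans h') hd.cd, absurd (h'.symm.trans h'') hd.de]
      · rw [h0] at hm0; rw [h1] at hm1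
        rcases hm0 with ⟨h', -⟩ | ⟨h', -⟩ | ⟨h', -⟩ <;>
          rcases hm1 with ⟨h'', -⟩ | ⟨h'', -⟩ | ⟨h'', -⟩
        exacts [absurd (h''.symm.trans h') hd.ab, absurd (h'.symm.trans h'') hd.bc,
          absurd (h'.symm.trans h'') hd.bd, absurd (h''.symm.trans h') hd.ac, h',
          absurd (h'.symm.trans h'') hd.cd, absurd (h''.symm.trans h') hd.ae,
          absurd (h''.symm.trans h') hd.ce, absurd (h''.symm.trans h') hd.de]
    have hwc : Step gz w c w₀' := by rw [← wlab hwstep]; exact hwstep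
    -- find an X1 index
    obtain ⟨i, hi, hXi⟩ : ∃ i, i < n ∧ cls i = X1 := by
      rcases hpatt 0 hn with ⟨h0, h1, -⟩ | ⟨h0, -, -⟩
      · rcases Nat.lt_or_ge 1 n with h | h
        · exact ⟨1, h, h1⟩
        · exfalso
          have hn1 : n = 1 := le_antisymm h hn
          have e0 : Sim a b c d e (seq (par (lv 0) w) R) X0 := by
            rw [← h0]; exact hcls 0 (Nat.zero_le n)
          have e1 : Sim a b c d e (seq (par (lv 1) w) R) X1 := by
            rw [← h1]; exact hcls 1 hn
          rw [hn1] at hwrap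
          rw [hwrap] at e1
          exact MS.noConfusion (simUnique hd e0 e1)
      · exact ⟨0, hn, h0⟩
    have hX1 : Sim a b c d e (seq (par (lv i) w) R) X1 := by
      have := hcls i hi.le; rwa [hXi] at this
    obtain ⟨h1, hlabi⟩ : cls (i+1) = X0 ∧ lab i = b := by
      rcases hpatt i hi with ⟨h0, -, -⟩ | ⟨-, h1, h2⟩
      · rw [hXi] at h0; exact MS.noConfusion h0
      · exact ⟨h1, h2⟩
    have hX0' : Sim a b c d e (seq (par (lv (i+1)) w) R) X0 := by
      have := hcls (i+1) hi; rwa [h1] at this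
    -- X1 has an e-step to a Y0 state
    obtain ⟨E, hE, simEY0⟩ := sim_bwd hX1 wX1e
    rcases step_seq_inv hE with ⟨t, ht, rfl⟩ | ⟨htm, hRe⟩
    · rcases step_par_inv_gz ht with ⟨ve, hve, rfl⟩ | ⟨w'', hw'', rfl⟩
      · -- case A : e from the left component; c is still available
        have hc : Step gz (seq (par ve w) R) c (seq (par ve w₀') R) :=
          Step.seql (Step.parr hwc)
        obtain ⟨m'', hm'', -⟩ := sim_fwd simEY0 hc
        rcases hm'' with ⟨h', -⟩ | ⟨h', -⟩
        exacts [absurd h'.symm hd.ac, absurd h' hd.cd]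
      · exact absurd (wlab hw'') (fun h => hd.ce h.symm)
    · -- case B : e is a step of R, enabled by termination
      have hTR : ¬ Term R := by
        intro hR
        exact MS.noConfusion ((sim_term hX1).mp (Term.seq htm hR))
      have hnt1 : ¬ Term (par (lv (i+1)) w) := by
        intro ht
        obtain ⟨m'', hm'', -⟩ := sim_fwd hX0' (Step.seqr ht hRe)
        rcases hm'' with ⟨h', -⟩ | ⟨h', -⟩ | ⟨h', -⟩
        exacts [absurd h'.symm hd.ae, absurd h'.symm hd.ce, absurd h'.symm hd.de]
      obtain ⟨D, hD, simDZ⟩ := sim_bwd hX0' wX0d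
      rcases step_seq_inv hD with ⟨t, ht, rfl⟩ | ⟨htm', -⟩
      · rcases step_par_inv_gz ht with ⟨vd, hvd, rfl⟩ | ⟨w'', hw'', rfl⟩
        · obtain ⟨W, hW, simWT⟩ := sim_bwd simDZ wZc
          rcases step_seq_inv hW with ⟨t', -, rfl⟩ | ⟨htm2, -⟩
          · exact hTR (term_seq_inv ((sim_term simWT).mpr rfl)).2
          · obtain ⟨m'', hm'', -⟩ := sim_fwd simDZ (Step.seqr htm2 hRe)
            exact absurd hm''.1.symm hd.ce
        · exact absurd (wlab hw'') (fun h => hd.cd h.symm)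
      · exact hnt1 htm'
  · push_neg at hw
    by_cases htw : Term w
    · apply hIH R
      refine ⟨n, lv, lab, hn, hwrap, hstep, hreach, ?_⟩
      intro i hi
      have hp : PB (seq (lv i) R) (seq (par (lv i) w) R) :=
        pb_congr_seq (bisim_symm (pb_par_unit hw htw (lv i))) R
      rcases hGood i hi with h | h
      · exact Or.inl (sim_of_pb hp h)
      · exact Or.inr (sim_of_pb hp h)
    · apply hIH (seq dl R)
      refine ⟨n, lv, lab, hn, hwrap, hstep, hreach, ?_⟩
      intro i hi
      have hp : PB (seq (lv i) (seq dl R)) (seq (par (lv i) w) R) :=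
        bisim_comp (bisim_symm (pb_assoc (lv i) dl R))
          (pb_congr_seq (bisim_symm (pb_par_dl hw htw (lv i))) R)
      rcases hGood i hi with h | h
      · exact Or.inl (sim_of_pb hp h)
      · exact Or.inr (sim_of_pb hp h)

end CycleMachinery

section NoCyc

open MS

variable {a b c d e : Act}

theorem noCyc (hd : Dist a b c d e) :
    ∀ g : Expr Act, NoEncap g → ∀ R : Expr Act, ¬ IsCyc a b c d e R g := by
  intro g
  induction g with
  | dl =>
    rintro hg R ⟨n, u, lab, hn, hwrap, hstep, hreach, hGood⟩
    have h0 : u 0 = dl := reach_dl (hreach 0 (Nat.zero_le n))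
    have hs := hstep 0 hn
    rw [h0] at hs
    exact step_dl_inv hs
  | emp =>
    rintro hg R ⟨n, u, lab, hn, hwrap, hstep, hreach, hGood⟩
    have h0 : u 0 = emp := reach_emp (hreach 0 (Nat.zero_le n))
    have hs := hstep 0 hn
    rw [h0] at hs
    exact step_emp_inv hs
  | act o =>
    rintro hg R ⟨n, u, lab, hn, hwrap, hstep, hreach, hGood⟩
    obtain ⟨n', rfl⟩ : ∃ n', n = n' + 1 := ⟨n - 1, by omega⟩
    rcases reach_act (hreach 0 (Nat.zero_le _)) with h0 | h0
    · have hshape := step_shape (hstep n' (by omega)) (noEncap_reach (hreach n' (by omega)) hg)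
      rw [hwrap, h0] at hshape
      rcases hshape with h | ⟨x, y, h⟩ | ⟨x, y, h⟩ <;> cases h
    · have hs := hstep 0 (by omega)
      rw [h0] at hs
      exact step_emp_inv hs
  | alt p q ihp ihq =>
    rintro hg R ⟨n, u, lab, hn, hwrap, hstep, hreach, hGood⟩
    obtain ⟨n', rfl⟩ : ∃ n', n = n' + 1 := ⟨n - 1, by omega⟩
    rcases reach_alt (hreach 0 (Nat.zero_le _)) with h0 | h0 | h0
    · have hshape := step_shape (hstep n' (by omega)) (noEncap_reach (hreach n' (by omega)) hg)
      rw [hwrap, h0] at hshape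
      rcases hshape with h | ⟨x, y, h⟩ | ⟨x, y, h⟩ <;> cases h
    · exact ihp hg.1 R ⟨_, u, lab, hn, hwrap, hstep,
        cycProp hstep hwrap (Nat.zero_le _) h0, hGood⟩
    · exact ihq hg.2 R ⟨_, u, lab, hn, hwrap, hstep,
        cycProp hstep hwrap (Nat.zero_le _) h0, hGood⟩
  | seq p r ihp ihr =>
    rintro hg R ⟨n, u, lab, hn, hwrap, hstep, hreach, hGood⟩
    by_cases hRL : ∃ j, j ≤ n ∧ ∃ α r₁, Step gz r α r₁ ∧ Reach gz r₁ (u j)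
    · obtain ⟨j, hj, α, r₁, hs1, hr1⟩ := hRL
      exact ihr hg.2 R ⟨n, u, lab, hn, hwrap, hstep,
        cycProp hstep hwrap hj ((reach_single hs1).trans hr1), hGood⟩
    · have forms : ∀ i, i ≤ n → ∃ p', Reach gz p p' ∧ u i = seq p' r := by
        intro i hi
        rcases reach_seq (hreach i hi) with h | ⟨α, r₁, hs1, hr1⟩
        · exact h
        · exact absurd ⟨i, hi, α, r₁, hs1, hr1⟩ hRL
      apply ihp hg.1 (seq r R)
      refine ⟨n, fun i => lft (u i), lab, hn,
        by show lft (u n) = lft (u 0); rw [hwrap], ?_, ?_, ?_⟩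
      · intro i hi
        show Step gz (lft (u i)) (lab i) (lft (u (i+1)))
        obtain ⟨p', hp', hf⟩ := forms i hi.le
        obtain ⟨p2, hp2, hf2⟩ := forms (i+1) hi
        have hstepi := hstep i hi
        rw [hf, hf2] at hstepi
        rw [hf, hf2]
        simp only [lft_seq]
        rcases step_seq_inv hstepi with ⟨p'', hp'', heq⟩ | ⟨-, hrr⟩
        · injection heq with e1 e2
          rw [e1]; exact hp''
        · exact absurd ⟨i+1, hi, lab i, seq p2 r, hrr,
            by rw [hf2]; exact Relation.ReflTransGen.refl⟩ hRL
      · intro i hi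
        show Reach gz p (lft (u i))
        obtain ⟨p', hp', hf⟩ := forms i hi
        rw [hf]; simp only [lft_seq]; exact hp'
      · intro i hi
        show Sim a b c d e ((lft (u i)).seq (r.seq R)) X0 ∨
          Sim a b c d e ((lft (u i)).seq (r.seq R)) X1
        obtain ⟨p', hp', hf⟩ := forms i hi
        have hG := hGood i hi
        rw [hf] at hG
        rw [hf]; simp only [lft_seq]
        have hp : PB (seq p' (seq r R)) (seq (seq p' r) R) := bisim_symm (pb_assoc p' r R)
        rcases hG with h | h
        · exact Or.inl (sim_of_pb hp h)
        · exact Or.inr (sim_of_pb hp h)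
  | star s ihs =>
    rintro hg R ⟨n, u, lab, hn, hwrap, hstep, hreach, hGood⟩
    obtain ⟨n', rfl⟩ : ∃ n', n = n' + 1 := ⟨n - 1, by omega⟩
    have forms : ∀ i, i ≤ n' + 1 → ∃ y, Reach gz s y ∧ u i = seq y (star s) := by
      intro i hi
      rcases reach_star (hreach i hi) with h0 | h
      · exfalso
        match i, hi with
        | 0, _ =>
          have hshape := step_shape (hstep n' (by omega))
            (noEncap_reach (hreach n' (by omega)) hg)
          rw [hwrap, h0] at hshape
          rcases hshape with h | ⟨x, y, h⟩ | ⟨x, y, h⟩ <;> cases h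
        | (k+1), hik =>
          have hshape := step_shape (hstep k (by omega))
            (noEncap_reach (hreach k (by omega)) hg)
          rw [h0] at hshape
          rcases hshape with h | ⟨x, y, h⟩ | ⟨x, y, h⟩ <;> cases h
      · exact h
    have stepcase : ∀ i, i < n' + 1 →
        Step gz (lft (u i)) (lab i) (lft (u (i+1))) ∨
        (Term (lft (u i)) ∧ Step gz s (lab i) (lft (u (i+1)))) := by
      intro i hi
      obtain ⟨y, hy, hf⟩ := forms i hi.le
      obtain ⟨y2, hy2, hf2⟩ := forms (i+1) hi
      have hstepi := hstep i hi
      rw [hf, hf2] at hstepi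
      rw [hf, hf2]
      simp only [lft_seq]
      rcases step_seq_inv hstepi with ⟨y'', hy'', heq⟩ | ⟨ht, hrr⟩
      · injection heq with e1 e2
        rw [e1]; exact Or.inl hy''
      · obtain ⟨s'', hs'', heq⟩ := step_star_inv hrr
        injection heq with e1 e2
        rw [e1]; exact Or.inr ⟨ht, hs''⟩
    by_cases hres : ∃ i, i < n' + 1 ∧ Term (lft (u i)) ∧ Step gz s (lab i) (lft (u (i+1)))
    · obtain ⟨i, hi, hti, hsi⟩ := hres
      obtain ⟨y, -, hf⟩ := forms i hi.le
      obtain ⟨y2, -, hf2⟩ := forms (i+1) hi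
      have hGi := hGood i hi.le
      have hGi1 := hGood (i+1) hi
      rw [hf] at hGi
      rw [hf2] at hGi1
      rw [hf] at hti
      rw [hf2] at hsi
      simp only [lft_seq] at hti hsi
      rcases hGi with h1 | h1 <;> rcases hGi1 with h2 | h2
      · exact starContra hd hti hsi h1 h2 (Or.inl rfl) (Or.inl rfl)
      · exact starContra hd hti hsi h1 h2 (Or.inl rfl) (Or.inr rfl)
      · exact starContra hd hti hsi h1 h2 (Or.inr rfl) (Or.inl rfl)
      · exact starContra hd hti hsi h1 h2 (Or.inr rfl) (Or.inr rfl)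
    · have hsteps' : ∀ i, i < n' + 1 → Step gz (lft (u i)) (lab i) (lft (u (i+1))) := by
        intro i hi
        rcases stepcase i hi with h | ⟨ht, hs'⟩
        · exact h
        · exact absurd ⟨i, hi, ht, hs'⟩ hres
      apply ihs hg (seq (star s) R)
      refine ⟨n' + 1, fun i => lft (u i), lab, hn,
        by show lft (u (n'+1)) = lft (u 0); rw [hwrap], hsteps', ?_, ?_⟩
      · intro i hi
        show Reach gz s (lft (u i))
        obtain ⟨y, hy, hf⟩ := forms i hi
        rw [hf]; simp only [lft_seq]; exact hy
      · intro i hi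
        show Sim a b c d e ((lft (u i)).seq ((star s).seq R)) X0 ∨
          Sim a b c d e ((lft (u i)).seq ((star s).seq R)) X1
        obtain ⟨y, hy, hf⟩ := forms i hi
        have hG := hGood i hi
        rw [hf] at hG
        rw [hf]; simp only [lft_seq]
        have hp : PB (seq y (seq (star s) R)) (seq (seq y (star s)) R) :=
          bisim_symm (pb_assoc y (star s) R)
        rcases hG with h | h
        · exact Or.inl (sim_of_pb hp h)
        · exact Or.inr (sim_of_pb hp h)
  | par p q ihp ihq =>
    rintro hg R ⟨n, u, lab, hn, hwrap, hstep, hreach, hGood⟩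
    have forms : ∀ i, i ≤ n → u i = par (plf (u i)) (prt (u i)) ∧
        Reach gz p (plf (u i)) ∧ Reach gz q (prt (u i)) := by
      intro i hi
      obtain ⟨p', q', hp', hq', hf⟩ := reach_par (hreach i hi)
      rw [hf]; simp only [plf_par, prt_par]
      exact ⟨trivial, hp', hq'⟩
    have sides : ∀ i, i < n →
        (Step gz (plf (u i)) (lab i) (plf (u (i+1))) ∧ prt (u (i+1)) = prt (u i)) ∨
        (Step gz (prt (u i)) (lab i) (prt (u (i+1))) ∧ plf (u (i+1)) = plf (u i)) := by
      intro i hi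
      have hstepi := hstep i hi
      rw [(forms i hi.le).1, (forms (i+1) hi).1] at hstepi
      rcases step_par_inv_gz hstepi with ⟨p'', hp'', heq⟩ | ⟨q'', hq'', heq⟩
      · injection heq with e1 e2
        exact Or.inl ⟨by rw [e1]; exact hp'', e2⟩
      · injection heq with e1 e2
        exact Or.inr ⟨by rw [e2]; exact hq'', e1⟩
    obtain ⟨cls, hcls, hcls01, hpatt⟩ := cycClsEx hd hstep hGood
    by_cases hallL : ∀ i, i < n →
        Step gz (plf (u i)) (lab i) (plf (u (i+1))) ∧ prt (u (i+1)) = prt (u i)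
    · have hwconst : ∀ i, i ≤ n → prt (u i) = prt (u 0) := by
        intro i
        induction i with
        | zero => intro _; rfl
        | succ k ih => intro hk; rw [(hallL k hk).2]; exact ih (by omega)
      apply parAllL (lv := fun i => plf (u i)) (w := prt (u 0)) (lab := lab) (n := n) hd
        (fun R' => ihp hg.1 R') hn (by show plf (u n) = plf (u 0); rw [hwrap])
        (fun i hi => (forms i hi).2.1)
        (fun i hi => (hallL i hi).1)
      intro i hi
      show Sim a b c d e ((par (plf (u i)) (prt (u 0))).seq R) X0 ∨
        Sim a b c d e ((par (plf (u i)) (prt (u 0))).seq R) X1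
      have hG := hGood i hi
      have hue : u i = par (plf (u i)) (prt (u 0)) := by
        rw [← hwconst i hi]; exact (forms i hi).1
      rw [hue] at hG
      exact hG
    · by_cases hallR : ∀ i, i < n →
          Step gz (prt (u i)) (lab i) (prt (u (i+1))) ∧ plf (u (i+1)) = plf (u i)
      · have hvconst : ∀ i, i ≤ n → plf (u i) = plf (u 0) := by
          intro i
          induction i with
          | zero => intro _; rfl
          | succ k ih => intro hk; rw [(hallR k hk).2]; exact ih (by omega)
        apply parAllL (lv := fun i => prt (u i)) (w := plf (u 0)) (lab := lab) (n := n) hd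
          (fun R' => ihq hg.2 R') hn (by show prt (u n) = prt (u 0); rw [hwrap])
          (fun i hi => (forms i hi).2.2)
          (fun i hi => (hallR i hi).1)
        intro i hi
        show Sim a b c d e ((par (prt (u i)) (plf (u 0))).seq R) X0 ∨
          Sim a b c d e ((par (prt (u i)) (plf (u 0))).seq R) X1
        have hG := hGood i hi
        have hue : u i = par (plf (u 0)) (prt (u i)) := by
          rw [← hvconst i hi]; exact (forms i hi).1
        rw [hue] at hG
        have hp : PB (seq (par (prt (u i)) (plf (u 0))) R)
            (seq (par (plf (u 0)) (prt (u i))) R) :=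
          pb_congr_seq (pb_par_comm _ _) R
        rcases hG with h | h
        · exact Or.inl (sim_of_pb hp h)
        · exact Or.inr (sim_of_pb hp h)
      · obtain ⟨i1, hi1, hnL⟩ : ∃ i, i < n ∧
            ¬ (Step gz (plf (u i)) (lab i) (plf (u (i+1))) ∧ prt (u (i+1)) = prt (u i)) := by
          by_contra hno
          push_neg at hno
          exact hallL fun i hi => hno i hi
        obtain ⟨i2, hi2, hnR⟩ : ∃ i, i < n ∧
            ¬ (Step gz (prt (u i)) (lab i) (prt (u (i+1))) ∧ plf (u (i+1)) = plf (u i)) := by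
          by_contra hno
          push_neg at hno
          exact hallR fun i hi => hno i hi
        have hLi2 := (sides i2 hi2).resolve_right hnR
        obtain ⟨k, hk1, hcase⟩ := adjDiff (P := fun k =>
          Step gz (plf (u k)) (lab k) (plf (u (k+1))) ∧ prt (u (k+1)) = prt (u k))
          hi2 hi1 hLi2 hnL
        have hk0 : k < n := by omega
        have hpk := hpatt k hk0
        have hpk1 := hpatt (k+1) hk1
        rcases hcase with ⟨hLk, hnLk1⟩ | ⟨hnLk, hLk1⟩
        · have hRk1 := (sides (k+1) hk1).resolve_left hnLk1
          have hws : Step gz (prt (u k)) (lab (k+1)) (prt (u (k+1+1))) := by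
            rw [← hLk.2]; exact hRk1.1
          have hulift : Step gz (u k) (lab (k+1)) (par (plf (u k)) (prt (u (k+1+1)))) := by
            rw [(forms k hk0.le).1]
            exact Step.parr hws
          obtain ⟨m'', hm'', -⟩ := sim_fwd (hcls k hk0.le) (Step.seql hulift)
          rcases hpk with ⟨hc0, hc1, -⟩ | ⟨hc0, hc1, -⟩
          · rcases hpk1 with ⟨hd0, -, -⟩ | ⟨-, -, hlab1⟩
            · rw [hc1] at hd0; exact MS.noConfusion hd0
            · rw [hc0, hlab1] at hm''
              rcases hm'' with ⟨h', -⟩ | ⟨h', -⟩ | ⟨h', -⟩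
              exacts [absurd h'.symm hd.ab, absurd h' hd.bc, absurd h' hd.bd]
          · rcases hpk1 with ⟨-, -, hlab1⟩ | ⟨hd0, -, -⟩
            · rw [hc0, hlab1] at hm''
              rcases hm'' with ⟨h', -⟩ | ⟨h', -⟩ | ⟨h', -⟩
              exacts [absurd h' hd.ab, absurd h' hd.ac, absurd h' hd.ae]
            · rw [hc1] at hd0; exact MS.noConfusion hd0
        · have hRk := (sides k hk0).resolve_left hnLk
          have hvs : Step gz (plf (u k)) (lab (k+1)) (plf (u (k+1+1))) := by
            rw [← hRk.2]; exact hLk1.1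
          have hulift : Step gz (u k) (lab (k+1)) (par (plf (u (k+1+1))) (prt (u k))) := by
            rw [(forms k hk0.le).1]
            exact Step.parl hvs
          obtain ⟨m'', hm'', -⟩ := sim_fwd (hcls k hk0.le) (Step.seql hulift)
          rcases hpk with ⟨hc0, hc1, -⟩ | ⟨hc0, hc1, -⟩
          · rcases hpk1 with ⟨hd0, -, -⟩ | ⟨-, -, hlab1⟩
            · rw [hc1] at hd0; exact MS.noConfusion hd0
            · rw [hc0, hlab1] at hm''
              rcases hm'' with ⟨h', -⟩ | ⟨h', -⟩ | ⟨h', -⟩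
              exacts [absurd h'.symm hd.ab, absurd h' hd.bc, absurd h' hd.bd]
          · rcases hpk1 with ⟨-, -, hlab1⟩ | ⟨hd0, -, -⟩
            · rw [hc0, hlab1] at hm''
              rcases hm'' with ⟨h', -⟩ | ⟨h', -⟩ | ⟨h', -⟩
              exacts [absurd h' hd.ab, absurd h' hd.ac, absurd h' hd.ae]
            · rw [hc1] at hd0; exact MS.noConfusion hd0
  | encap H p ihp =>
    intro hg
    simp only [NoEncap] at hg

end NoCyc

section Concrete

open MS

open Classical in
/-- the communication function with γ(b,c) = γ(c,b) = e -/
noncomputable def gc (b c e : Act) : Act → Act → Option Act :=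
  fun x y => if (x = b ∧ y = c) ∨ (x = c ∧ y = b) then some e else none

variable {a b c d e : Act}

lemma gc_bc : gc b c e b c = some e := by
  unfold gc
  exact if_pos (Or.inl ⟨rfl, rfl⟩)

lemma gc_inv {x y o : Act} (h : gc b c e x y = some o) :
    ((x = b ∧ y = c) ∨ (x = c ∧ y = b)) ∧ o = e := by
  by_cases hcnd : (x = b ∧ y = c) ∨ (x = c ∧ y = b)
  · refine ⟨hcnd, ?_⟩
    have h2 : some e = some o := by rw [← h]; unfold gc; rw [if_pos hcnd]
    exact (Option.some.inj h2).symm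
  · exfalso
    have h2 : (none : Option Act) = some o := by rw [← h]; unfold gc; rw [if_neg hcnd]
    cases h2

lemma gc_comm : ∀ x y, gc b c e x y = gc b c e y x := by
  intro x y
  unfold gc
  by_cases hcnd : (x = b ∧ y = c) ∨ (x = c ∧ y = b)
  · rw [if_pos hcnd, if_pos (by tauto)]
  · rw [if_neg hcnd, if_neg (by tauto)]

lemma gc_none_left (hd : Dist a b c d e) (z : Act) : gc b c e e z = none := by
  unfold gc
  rw [if_neg]
  rintro (⟨h, -⟩ | ⟨h, -⟩)
  exacts [hd.be h.symm, hd.ce h.symm]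

lemma gc_none_right (hd : Dist a b c d e) (z : Act) : gc b c e z e = none := by
  unfold gc
  rw [if_neg]
  rintro (⟨-, h⟩ | ⟨-, h⟩)
  exacts [hd.ce h.symm, hd.be h.symm]

lemma gc_commfun (hd : Dist a b c d e) : IsCommFun (gc b c e) := by
  refine ⟨gc_comm, ?_⟩
  intro x y z
  have h1 : (gc b c e x y).bind (fun w => gc b c e w z) = none := by
    rcases hE : gc b c e x y with - | w
    · rfl
    · obtain ⟨-, hw⟩ := gc_inv hE
      show gc b c e w z = none
      rw [hw]
      exact gc_none_left hd z
  have h2 : (gc b c e y z).bind (fun w => gc b c e x w) = none := by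
    rcases hE : gc b c e y z with - | w
    · rfl
    · obtain ⟨-, hw⟩ := gc_inv hE
      show gc b c e x w = none
      rw [hw]
      exact gc_none_right hd x
  rw [h1, h2]

/-- the concrete ACP expression `(ε·(ab)*)·d ∥ c` is bisimilar to `X0`. -/
lemma concreteSim (hd : Dist a b c d e) :
    Bisimilar (Step (gc b c e)) Term (MStep a b c d e) MTerm
      (par (seq (seq emp (star (seq (act a) (act b)))) (act d)) (act c)) X0 := by
  set γ := gc b c e with hγdef
  set S : Expr Act := star (seq (act a) (act b)) with hS
  set L0 : Expr Act := seq (seq emp S) (act d) with hL0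
  set L1 : Expr Act := seq (seq (seq emp (act b)) S) (act d) with hL1
  have stepL0a : Step γ L0 a L1 :=
    Step.seql (Step.seqr Term.emp (Step.star (Step.seql Step.act)))
  have stepL0d : Step γ L0 d emp := Step.seqr (Term.seq Term.emp Term.star) Step.act
  have stepL1b : Step γ L1 b L0 := Step.seql (Step.seql (Step.seqr Term.emp Step.act))
  have invL0 : ∀ {α : Act} {u : Expr Act}, Step γ L0 α u →
      (α = a ∧ u = L1) ∨ (α = d ∧ u = emp) := by
    intro α u h
    rcases step_seq_inv h with ⟨t, ht, rfl⟩ | ⟨-, hact⟩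
    · rcases step_seq_inv ht with ⟨x, hemp, -⟩ | ⟨-, hSs⟩
      · exact absurd hemp step_emp_inv
      · obtain ⟨s', hs', rfl⟩ := step_star_inv hSs
        rcases step_seq_inv hs' with ⟨x, hacta, rfl⟩ | ⟨hta, -⟩
        · obtain ⟨rfl, rfl⟩ := step_act_inv hacta
          exact Or.inl ⟨rfl, rfl⟩
        · exact absurd hta term_act_inv
    · obtain ⟨rfl, rfl⟩ := step_act_inv hact
      exact Or.inr ⟨rfl, rfl⟩
  have invL1 : ∀ {α : Act} {u : Expr Act}, Step γ L1 α u → α = b ∧ u = L0 := by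
    intro α u h
    rcases step_seq_inv h with ⟨t, ht, rfl⟩ | ⟨htm, -⟩
    · rcases step_seq_inv ht with ⟨x, hx, rfl⟩ | ⟨htB, -⟩
      · rcases step_seq_inv hx with ⟨y, hemp, -⟩ | ⟨-, hb⟩
        · exact absurd hemp step_emp_inv
        · obtain ⟨rfl, rfl⟩ := step_act_inv hb
          exact ⟨rfl, rfl⟩
      · exact absurd (term_seq_inv htB).2 term_act_inv
    · exact absurd (term_seq_inv (term_seq_inv htm).1).2 term_act_inv
  have ntL0 : ¬ Term L0 := fun h => term_act_inv (term_seq_inv h).2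
  have ntL1 : ¬ Term L1 := fun h => term_act_inv (term_seq_inv h).2
  refine ⟨fun x m =>
    (x = par L0 (act c) ∧ m = X0) ∨ (x = par L1 (act c) ∧ m = X1) ∨
    (x = par L0 emp ∧ m = Y0) ∨ (x = par L1 emp ∧ m = Y1) ∨
    (x = par emp (act c) ∧ m = Z) ∨ (x = par emp emp ∧ m = T), ?_, Or.inl ⟨rfl, rfl⟩⟩
  rintro s m (⟨rfl, rfl⟩ | ⟨rfl, rfl⟩ | ⟨rfl, rfl⟩ | ⟨rfl, rfl⟩ | ⟨rfl, rfl⟩ | ⟨rfl, rfl⟩)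
  · -- X0
    refine ⟨?_, ?_, ?_⟩
    · intro α s' hs
      rcases step_par_inv hs with ⟨t, hL, rfl⟩ | ⟨t, hc, rfl⟩ | ⟨p', q', β, β', hL, hc2, hγ, rfl⟩
      · rcases invL0 hL with ⟨rfl, rfl⟩ | ⟨rfl, rfl⟩
        · exact ⟨X1, Or.inl ⟨rfl, rfl⟩, Or.inr (Or.inl ⟨rfl, rfl⟩)⟩
        · exact ⟨Z, Or.inr (Or.inr ⟨rfl, rfl⟩),
            Or.inr (Or.inr (Or.inr (Or.inr (Or.inl ⟨rfl, rfl⟩))))⟩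
      · obtain ⟨rfl, rfl⟩ := step_act_inv hc
        exact ⟨Y0, Or.inr (Or.inl ⟨rfl, rfl⟩), Or.inr (Or.inr (Or.inl ⟨rfl, rfl⟩))⟩
      · obtain ⟨rfl, rfl⟩ := step_act_inv hc2
        obtain ⟨hcs, -⟩ := gc_inv hγ
        rcases invL0 hL with ⟨rfl, -⟩ | ⟨rfl, -⟩
        · rcases hcs with ⟨h1, -⟩ | ⟨h1, -⟩
          exacts [absurd h1 hd.ab, absurd h1 hd.ac]
        · rcases hcs with ⟨h1, -⟩ | ⟨h1, -⟩
          exacts [absurd h1.symm hd.bd, absurd h1.symm hd.cd]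
    · rintro α m' (⟨rfl, rfl⟩ | ⟨rfl, rfl⟩ | ⟨rfl, rfl⟩)
      · exact ⟨par L1 (act c), Step.parl stepL0a, Or.inr (Or.inl ⟨rfl, rfl⟩)⟩
      · exact ⟨par L0 emp, Step.parr Step.act, Or.inr (Or.inr (Or.inl ⟨rfl, rfl⟩))⟩
      · exact ⟨par emp (act c), Step.parl stepL0d,
          Or.inr (Or.inr (Or.inr (Or.inr (Or.inl ⟨rfl, rfl⟩))))⟩
    · exact iff_of_false (fun h => ntL0 (term_par_inv h).1) (fun h => MS.noConfusion h)
  · -- X1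
    refine ⟨?_, ?_, ?_⟩
    · intro α s' hs
      rcases step_par_inv hs with ⟨t, hL, rfl⟩ | ⟨t, hc, rfl⟩ | ⟨p', q', β, β', hL, hc2, hγ, rfl⟩
      · obtain ⟨rfl, rfl⟩ := invL1 hL
        exact ⟨X0, Or.inl ⟨rfl, rfl⟩, Or.inl ⟨rfl, rfl⟩⟩
      · obtain ⟨rfl, rfl⟩ := step_act_inv hc
        exact ⟨Y1, Or.inr (Or.inl ⟨rfl, rfl⟩), Or.inr (Or.inr (Or.inr (Or.inl ⟨rfl, rfl⟩)))⟩
      · obtain ⟨rfl, rfl⟩ := step_act_inv hc2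
        obtain ⟨rfl, rfl⟩ := invL1 hL
        obtain ⟨-, rfl⟩ := gc_inv hγ
        exact ⟨Y0, Or.inr (Or.inr ⟨rfl, rfl⟩), Or.inr (Or.inr (Or.inl ⟨rfl, rfl⟩))⟩
    · rintro α m' (⟨rfl, rfl⟩ | ⟨rfl, rfl⟩ | ⟨rfl, rfl⟩)
      · exact ⟨par L0 (act c), Step.parl stepL1b, Or.inl ⟨rfl, rfl⟩⟩
      · exact ⟨par L1 emp, Step.parr Step.act, Or.inr (Or.inr (Or.inr (Or.inl ⟨rfl, rfl⟩)))⟩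
      · exact ⟨par L0 emp, Step.comm stepL1b Step.act gc_bc,
          Or.inr (Or.inr (Or.inl ⟨rfl, rfl⟩))⟩
    · exact iff_of_false (fun h => ntL1 (term_par_inv h).1) (fun h => MS.noConfusion h)
  · -- Y0
    refine ⟨?_, ?_, ?_⟩
    · intro α s' hs
      rcases step_par_inv hs with ⟨t, hL, rfl⟩ | ⟨t, hc, rfl⟩ | ⟨p', q', β, β', hL, hc2, hγ, rfl⟩
      · rcases invL0 hL with ⟨rfl, rfl⟩ | ⟨rfl, rfl⟩
        · exact ⟨Y1, Or.inl ⟨rfl, rfl⟩, Or.inr (Or.inr (Or.inr (Or.inl ⟨rfl, rfl⟩)))⟩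
        · exact ⟨T, Or.inr ⟨rfl, rfl⟩,
            Or.inr (Or.inr (Or.inr (Or.inr (Or.inr ⟨rfl, rfl⟩))))⟩
      · exact absurd hc step_emp_inv
      · exact absurd hc2 step_emp_inv
    · rintro α m' (⟨rfl, rfl⟩ | ⟨rfl, rfl⟩)
      · exact ⟨par L1 emp, Step.parl stepL0a, Or.inr (Or.inr (Or.inr (Or.inl ⟨rfl, rfl⟩)))⟩
      · exact ⟨par emp emp, Step.parl stepL0d,
          Or.inr (Or.inr (Or.inr (Or.inr (Or.inr ⟨rfl, rfl⟩))))⟩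
    · exact iff_of_false (fun h => ntL0 (term_par_inv h).1) (fun h => MS.noConfusion h)
  · -- Y1
    refine ⟨?_, ?_, ?_⟩
    · intro α s' hs
      rcases step_par_inv hs with ⟨t, hL, rfl⟩ | ⟨t, hc, rfl⟩ | ⟨p', q', β, β', hL, hc2, hγ, rfl⟩
      · obtain ⟨rfl, rfl⟩ := invL1 hL
        exact ⟨Y0, ⟨rfl, rfl⟩, Or.inr (Or.inr (Or.inl ⟨rfl, rfl⟩))⟩
      · exact absurd hc step_emp_inv
      · exact absurd hc2 step_emp_inv
    · rintro α m' ⟨rfl, rfl⟩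
      exact ⟨par L0 emp, Step.parl stepL1b, Or.inr (Or.inr (Or.inl ⟨rfl, rfl⟩))⟩
    · exact iff_of_false (fun h => ntL1 (term_par_inv h).1) (fun h => MS.noConfusion h)
  · -- Z
    refine ⟨?_, ?_, ?_⟩
    · intro α s' hs
      rcases step_par_inv hs with ⟨t, hL, rfl⟩ | ⟨t, hc, rfl⟩ | ⟨p', q', β, β', hL, hc2, hγ, rfl⟩
      · exact absurd hL step_emp_inv
      · obtain ⟨rfl, rfl⟩ := step_act_inv hc
        exact ⟨T, ⟨rfl, rfl⟩, Or.inr (Or.inr (Or.inr (Or.inr (Or.inr ⟨rfl, rfl⟩))))⟩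
      · exact absurd hL step_emp_inv
    · rintro α m' ⟨rfl, rfl⟩
      exact ⟨par emp emp, Step.parr Step.act,
        Or.inr (Or.inr (Or.inr (Or.inr (Or.inr ⟨rfl, rfl⟩))))⟩
    · exact iff_of_false (fun h => term_act_inv (term_par_inv h).2) (fun h => MS.noConfusion h)
  · -- T
    refine ⟨?_, ?_, ?_⟩
    · intro α s' hs
      rcases step_par_inv hs with ⟨t, hL, rfl⟩ | ⟨t, hc, rfl⟩ | ⟨p', q', β, β', hL, hc2, hγ, rfl⟩
      · exact absurd hL step_emp_inv
      · exact absurd hc step_emp_inv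
      · exact absurd hL step_emp_inv
    · rintro α m' h
      exact absurd h id
    · exact iff_of_true (Term.par Term.emp Term.emp) rfl

/-- a PA expression bisimilar to `X0` yields a contradiction. -/
lemma mainContra (hd : Dist a b c d e) {q : Expr Act} (hq : NoEncap q)
    (hsim0 : Sim a b c d e q X0) : False := by
  have block : ∀ x : Expr Act, Sim a b c d e x X0 →
      ∃ y z, Step gz x a y ∧ Step gz y b z ∧ Sim a b c d e y X1 ∧ Sim a b c d e z X0 := by
    intro x hx
    obtain ⟨y, hy, hsy⟩ := sim_bwd hx (Or.inl ⟨rfl, rfl⟩ : MStep a b c d e X0 a X1)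
    obtain ⟨z, hz, hsz⟩ := sim_bwd hsy (Or.inl ⟨rfl, rfl⟩ : MStep a b c d e X1 b X0)
    exact ⟨y, z, hy, hz, hsy, hsz⟩
  let C := {x : Expr Act // Sim a b c d e x X0 ∧ Reach gz q x}
  let nxt : C → C := fun x =>
    ⟨((block x.1 x.2.1).choose_spec).choose,
      ((block x.1 x.2.1).choose_spec).choose_spec.2.2.2,
      reach_step (reach_step x.2.2 ((block x.1 x.2.1).choose_spec).choose_spec.1)
        ((block x.1 x.2.1).choose_spec).choose_spec.2.1⟩
  let F : ℕ → C := fun n => Nat.rec ⟨q, hsim0, Relation.ReflTransGen.refl⟩ (fun _ p => nxt p) n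
  let f : ℕ → Expr Act := fun n => (F n).1
  let my : ℕ → Expr Act := fun n => (block (F n).1 (F n).2.1).choose
  have hstep1 : ∀ n, Step gz (f n) a (my n) :=
    fun n => ((block (F n).1 (F n).2.1).choose_spec).choose_spec.1
  have hstep2 : ∀ n, Step gz (my n) b (f (n+1)) :=
    fun n => ((block (F n).1 (F n).2.1).choose_spec).choose_spec.2.1
  have hsimy : ∀ n, Sim a b c d e (my n) X1 :=
    fun n => ((block (F n).1 (F n).2.1).choose_spec).choose_spec.2.2.1
  have hsimf : ∀ n, Sim a b c d e (f n) X0 := fun n => (F n).2.1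
  have hreachf : ∀ n, Reach gz q (f n) := fun n => (F n).2.2
  -- pigeonhole
  obtain ⟨i, j, hij, hfeq⟩ : ∃ i j : ℕ, i < j ∧ f i = f j := by
    have hfin : Finite {x : Expr Act // Reach gz q x} := (reach_finite q).to_subtype
    obtain ⟨i, j, hne, heq⟩ := Finite.exists_ne_map_eq_of_infinite
      (fun n : ℕ => (⟨f n, hreachf n⟩ : {x : Expr Act // Reach gz q x}))
    have heq' : f i = f j := Subtype.mk_eq_mk.mp heq
    rcases Nat.lt_or_ge i j with h | h
    · exact ⟨i, j, h, heq'⟩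
    · exact ⟨j, i, lt_of_le_of_ne h (fun hh => hne hh.symm), heq'.symm⟩
  -- build the cycle
  apply noCyc hd q hq emp
  refine ⟨2 * (j - i),
    fun t => if t % 2 = 0 then f (i + t / 2) else my (i + t / 2),
    fun t => if t % 2 = 0 then a else b, by omega, ?_, ?_, ?_, ?_⟩
  · beta_reduce
    have h1 : (2 * (j - i)) % 2 = 0 := by omega
    rw [if_pos h1, if_pos rfl]
    have h2 : i + 2 * (j - i) / 2 = j := by omega
    rw [h2]
    show f j = f (i + 0 / 2)
    have h3 : i + 0 / 2 = i := by omega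
    rw [h3]
    exact hfeq.symm
  · intro t ht
    beta_reduce
    by_cases h2 : t % 2 = 0
    · have h3 : (t + 1) % 2 ≠ 0 := by omega
      have h4 : (t + 1) / 2 = t / 2 := by omega
      rw [if_pos h2, if_pos h2, if_neg h3, h4]
      exact hstep1 (i + t / 2)
    · have h3 : (t + 1) % 2 = 0 := by omega
      have h4 : (t + 1) / 2 = t / 2 + 1 := by omega
      rw [if_neg h2, if_neg h2, if_pos h3, h4]
      have h5 : i + (t / 2 + 1) = (i + t / 2) + 1 := by omega
      rw [h5]
      exact hstep2 (i + t / 2)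
  · intro t ht
    beta_reduce
    by_cases h2 : t % 2 = 0
    · rw [if_pos h2]; exact hreachf (i + t / 2)
    · rw [if_neg h2]; exact reach_step (hreachf (i + t / 2)) (hstep1 (i + t / 2))
  · intro t ht
    beta_reduce
    by_cases h2 : t % 2 = 0
    · rw [if_pos h2]
      exact Or.inl (sim_of_pb (pb_seq_emp _) (hsimf (i + t / 2)))
    · rw [if_neg h2]
      exact Or.inr (sim_of_pb (pb_seq_emp _) (hsimy (i + t / 2)))

end Concrete

end PAProof
end AuxPA

/-- PA*01 is less expressive than `⋃_γ ACP*01` modulo bisimilarity: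
every PA*01 expression (ACP*01 expression without encapsulation, with the
everywhere-undefined communication function) is bisimilar to an ACP*01
expression for some communication function `γ`, and there are a communication
function `γ` with `γ b c = e` and an ACP*01 expression, namely
`ε·(a·b)*·d ‖ c` (with `a`, `b`, `c`, `d`, `e` distinct), that is not bisimilar
to any PA*01 expression. -/
theorem pa_less_expressive_than_acp {Act : Type} (a b c d e : Act)
    (hab : a ≠ b) (hac : a ≠ c) (had : a ≠ d) (hae : a ≠ e)
    (hbc : b ≠ c) (hbd : b ≠ d) (hbe : b ≠ e)
    (hcd : c ≠ d) (hce : c ≠ e) (hde : d ≠ e) :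
    (∀ p : Expr Act, NoEncap p →
      ∃ γ : Act → Act → Option Act, IsCommFun γ ∧
        ∃ q : Expr Act,
          Bisimilar (Step (fun _ _ => none)) Term (Step γ) Term p q) ∧
    (∃ γ : Act → Act → Option Act, IsCommFun γ ∧ γ b c = some e ∧
      ∀ q : Expr Act, NoEncap q →
        ¬ Bisimilar (Step (fun _ _ => none)) Term (Step γ) Term q
          (Expr.par
            (Expr.seq
              (Expr.seq Expr.emp (Expr.star (Expr.seq (Expr.act a) (Expr.act b))))
              (Expr.act d))
            (Expr.act c))) := by
  constructor
  · intro p hp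
    refine ⟨fun _ _ => none, ⟨fun x y => rfl, fun x y z => rfl⟩, p, ?_⟩
    exact ⟨Eq, fun s₁ s₂ h => by
      subst h
      exact ⟨fun α s' hs => ⟨s', hs, rfl⟩, fun α s' hs => ⟨s', hs, rfl⟩, Iff.rfl⟩, rfl⟩
  · have hd : PAProof.Dist a b c d e := ⟨hab, hac, had, hae, hbc, hbd, hbe, hcd, hce, hde⟩
    refine ⟨PAProof.gc b c e, PAProof.gc_commfun hd, PAProof.gc_bc, ?_⟩
    intro q hq hbis
    exact PAProof.mainContra hd hq
      (PAProof.bisim_comp hbis (PAProof.concreteSim hd))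
end
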